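/- arXiv:1310.4955 — 5 statements merged into one kernel-verified Lean document; each statement's English description precedes it below -/
import Mathlib

section
/- The function λ ↦ log φ(λ) is concave on (0,∞); the function λ ↦ log( λ/φ(λ) ) is concave on (0,∞); and for every c > 0, φ(s+c)/φ(s) → 1 and ( (s+c)/φ(s+c) ) / ( s/φ(s) ) → 1 as s → ∞. In other words, both φ and φ*(λ) := λ/φ(λ) satisfy Webster's conditions: log-concavity on (0,∞) together with lim_{s→∞} g(s+c)/g(s) = 1 for every c > 0. -/
open MeasureTheory Real Set Filter Topology

noncomputable section

set_option maxHeartbeats 1000000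

/-- Hölder-type lemma: if `h ≤ f^t g^s` a.e. with `t+s=1`, then `∫h ≤ (∫f)^t (∫g)^s`. -/
theorem holder2 {α : Type*} [MeasurableSpace α] {μ : Measure α} {h f g : α → ℝ}
    (hh : Integrable h μ) (hf : Integrable f μ) (hg : Integrable g μ)
    (hh0 : 0 ≤ᵐ[μ] h) (hf0 : 0 ≤ᵐ[μ] f) (hg0 : 0 ≤ᵐ[μ] g)
    {t s : ℝ} (ht : 0 < t) (hs : 0 < s) (hts : t + s = 1)
    (hle : ∀ᵐ z ∂μ, h z ≤ f z ^ t * g z ^ s) :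
    ∫ z, h z ∂μ ≤ (∫ z, f z ∂μ) ^ t * (∫ z, g z ∂μ) ^ s := by
  have ht1 : t < 1 := by linarith
  have hpq : (1/t).HolderConjugate (1/s) := Real.holderConjugate_one_div ht hs hts
  set F : α → ENNReal := fun z => (ENNReal.ofReal (f z)) ^ t with hF
  set G : α → ENNReal := fun z => (ENNReal.ofReal (g z)) ^ s with hG
  have hFm : AEMeasurable F μ := (ENNReal.measurable_ofReal.comp_aemeasurable
    hf.aestronglyMeasurable.aemeasurable).pow_const _
  have hGm : AEMeasurable G μ := (ENNReal.measurable_ofReal.comp_aemeasurable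
    hg.aestronglyMeasurable.aemeasurable).pow_const _
  have key := ENNReal.lintegral_mul_le_Lp_mul_Lq μ hpq hFm hGm
  have hFp : ∀ z, F z ^ t⁻¹ = ENNReal.ofReal (f z) := by
    intro z
    rw [hF, ← ENNReal.rpow_mul, mul_inv_cancel₀ ht.ne', ENNReal.rpow_one]
  have hGp : ∀ z, G z ^ s⁻¹ = ENNReal.ofReal (g z) := by
    intro z
    rw [hG, ← ENNReal.rpow_mul, mul_inv_cancel₀ hs.ne', ENNReal.rpow_one]
  simp only [hFp, hGp, one_div, inv_inv] at key
  -- key : ∫⁻ (F*G) ≤ (∫⁻ ofReal f)^t * (∫⁻ ofReal g)^s  (after rewriting exponents)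
  have hIf : ∫⁻ z, ENNReal.ofReal (f z) ∂μ = ENNReal.ofReal (∫ z, f z ∂μ) :=
    (ofReal_integral_eq_lintegral_ofReal hf hf0).symm
  have hIg : ∫⁻ z, ENNReal.ofReal (g z) ∂μ = ENNReal.ofReal (∫ z, g z ∂μ) :=
    (ofReal_integral_eq_lintegral_ofReal hg hg0).symm
  have hlh : ∫⁻ z, ENNReal.ofReal (h z) ∂μ ≤ ∫⁻ z, (F * G) z ∂μ := by
    refine lintegral_mono_ae ?_
    filter_upwards [hle, hf0, hg0] with z h1 h2 h3
    simp only [Pi.mul_apply, hF, hG]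
    calc ENNReal.ofReal (h z) ≤ ENNReal.ofReal (f z ^ t * g z ^ s) := ENNReal.ofReal_le_ofReal h1
      _ = ENNReal.ofReal (f z ^ t) * ENNReal.ofReal (g z ^ s) :=
          ENNReal.ofReal_mul (Real.rpow_nonneg h2 t)
      _ = ENNReal.ofReal (f z) ^ t * ENNReal.ofReal (g z) ^ s := by
          rw [← ENNReal.ofReal_rpow_of_nonneg h2 ht.le, ← ENNReal.ofReal_rpow_of_nonneg h3 hs.le]
  have hint : ∫ z, h z ∂μ = (∫⁻ z, ENNReal.ofReal (h z) ∂μ).toReal := by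
    rw [integral_eq_lintegral_of_nonneg_ae hh0 hh.aestronglyMeasurable]
  rw [hint]
  have hfin : (ENNReal.ofReal (∫ z, f z ∂μ)) ^ t * (ENNReal.ofReal (∫ z, g z ∂μ)) ^ s ≠ ⊤ := by
    exact ENNReal.mul_ne_top (ENNReal.rpow_ne_top_of_nonneg ht.le ENNReal.ofReal_ne_top)
      (ENNReal.rpow_ne_top_of_nonneg hs.le ENNReal.ofReal_ne_top)
  have := (hlh.trans key).trans_eq (by rw [hIf, hIg])
  calc (∫⁻ z, ENNReal.ofReal (h z) ∂μ).toReal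
      ≤ ((ENNReal.ofReal (∫ z, f z ∂μ)) ^ t * (ENNReal.ofReal (∫ z, g z ∂μ)) ^ s).toReal :=
        ENNReal.toReal_mono hfin this
    _ = (∫ z, f z ∂μ) ^ t * (∫ z, g z ∂μ) ^ s := by
        rw [ENNReal.toReal_mul, ← ENNReal.toReal_rpow, ← ENNReal.toReal_rpow,
          ENNReal.toReal_ofReal (integral_nonneg_of_ae hf0),
          ENNReal.toReal_ofReal (integral_nonneg_of_ae hg0)]

/-- Two-term Hölder inequality in ℝ. -/
theorem holder_pair {a b c d t s : ℝ} (ha : 0 ≤ a) (hb : 0 ≤ b) (hc : 0 ≤ c) (hd : 0 ≤ d)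
    (ht : 0 < t) (hs : 0 < s) (hts : t + s = 1) :
    a ^ t * b ^ s + c ^ t * d ^ s ≤ (a + c) ^ t * (b + d) ^ s := by
  rcases eq_or_lt_of_le (by positivity : (0:ℝ) ≤ a + c) with hac | hac
  · have ha0 : a = 0 := by linarith
    have hc0 : c = 0 := by linarith
    simp only [ha0, hc0, Real.zero_rpow ht.ne', zero_mul, add_zero, zero_add]
    positivity
  rcases eq_or_lt_of_le (by positivity : (0:ℝ) ≤ b + d) with hbd | hbd
  · have hb0 : b = 0 := by linarith
    have hd0 : d = 0 := by linarith
    simp only [hb0, hd0, Real.zero_rpow hs.ne', mul_zero, add_zero, zero_add]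
    positivity
  have hACpos : (0:ℝ) < (a+c)^t := Real.rpow_pos_of_pos hac t
  have hBDpos : (0:ℝ) < (b+d)^s := Real.rpow_pos_of_pos hbd s
  have key : a^t*b^s + c^t*d^s
      = (a+c)^t*(b+d)^s * ((a/(a+c))^t*(b/(b+d))^s + (c/(a+c))^t*(d/(b+d))^s) := by
    rw [Real.div_rpow ha hac.le, Real.div_rpow hb hbd.le, Real.div_rpow hc hac.le,
      Real.div_rpow hd hbd.le]
    field_simp
  have h1 := Real.geom_mean_le_arith_mean2_weighted ht.le hs.le
    (div_nonneg ha hac.le) (div_nonneg hb hbd.le) hts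
  have h2 := Real.geom_mean_le_arith_mean2_weighted ht.le hs.le
    (div_nonneg hc hac.le) (div_nonneg hd hbd.le) hts
  have hsum : (a/(a+c))^t*(b/(b+d))^s + (c/(a+c))^t*(d/(b+d))^s ≤ 1 := by
    have he : t*(a/(a+c)) + s*(b/(b+d)) + (t*(c/(a+c)) + s*(d/(b+d))) = 1 := by
      field_simp
      linear_combination (a*b + a*d + b*c + c*d) * hts
    linarith
  rw [key]
  calc (a+c)^t*(b+d)^s * ((a/(a+c))^t*(b/(b+d))^s + (c/(a+c))^t*(d/(b+d))^s)
      ≤ (a+c)^t*(b+d)^s * 1 := by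
        exact mul_le_mul_of_nonneg_left hsum (by positivity)
    _ = (a+c)^t*(b+d)^s := mul_one _

/-- `∫_0^z e^{-lu} du = (1 - e^{-lz})/l`. -/
theorem K_eq (l z : ℝ) (hl : 0 < l) :
    ∫ u in (0:ℝ)..z, Real.exp (-(l*u)) = (1 - Real.exp (-(l*z)))/l := by
  have H : ∀ u ∈ Set.uIcc (0:ℝ) z,
      HasDerivAt (fun v => -(Real.exp (-(l*v))/l)) (Real.exp (-(l*u))) u := by
    intro u _
    have h1 : HasDerivAt (fun v : ℝ => -(l*v)) (-l) u := by
      simpa using ((hasDerivAt_id u).const_mul (-l))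
    have h3 := ((h1.exp).div_const l).neg
    rw [mul_div_assoc, neg_div, div_self hl.ne', mul_neg_one, neg_neg] at h3
    exact h3
  have hcont : IntervalIntegrable (fun u => Real.exp (-(l*u))) volume 0 z :=
    (Real.continuous_exp.comp (by continuity)).intervalIntegrable 0 z
  rw [intervalIntegral.integral_eq_sub_of_hasDerivAt H hcont]
  simp [mul_zero]
  ring

/-- Pointwise log-convexity of `(1-e^{-lz})/l` in `l`. -/
theorem K_holder {x y t s : ℝ} (hx : 0 < x) (hy : 0 < y) (ht : 0 < t) (hs : 0 < s)
    (hts : t + s = 1) {z : ℝ} (hz : 0 < z) :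
    (1 - Real.exp (-((t*x+s*y)*z)))/(t*x+s*y)
      ≤ ((1 - Real.exp (-(x*z)))/x)^t * ((1 - Real.exp (-(y*z)))/y)^s := by
  have hw : 0 < t*x+s*y := by positivity
  rw [← K_eq x z hx, ← K_eq y z hy, ← K_eq _ z hw,
    intervalIntegral.integral_of_le hz.le, intervalIntegral.integral_of_le hz.le,
    intervalIntegral.integral_of_le hz.le]
  have hcx : Continuous fun u : ℝ => Real.exp (-(x*u)) :=
    Real.continuous_exp.comp (by continuity)
  have hcy : Continuous fun u : ℝ => Real.exp (-(y*u)) :=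
    Real.continuous_exp.comp (by continuity)
  have hcw : Continuous fun u : ℝ => Real.exp (-((t*x+s*y)*u)) :=
    Real.continuous_exp.comp (by continuity)
  refine holder2 (hcw.integrableOn_Ioc) (hcx.integrableOn_Ioc) (hcy.integrableOn_Ioc)
    (Filter.Eventually.of_forall fun u => (Real.exp_pos _).le)
    (Filter.Eventually.of_forall fun u => (Real.exp_pos _).le)
    (Filter.Eventually.of_forall fun u => (Real.exp_pos _).le)
    ht hs hts
    (Filter.Eventually.of_forall fun u => le_of_eq ?_)
  rw [← Real.exp_mul, ← Real.exp_mul, ← Real.exp_add]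
  ring_nf

/-- both `φ` and `φ*(λ) = λ/φ(λ)` satisfy Webster's conditions:
log-concavity on `(0,∞)` and `g(s+c)/g(s) → 1` as `s → ∞`, for every `c > 0`. -/
theorem stmt8
    (q a : ℝ) (hq : 0 ≤ q) (ha : 0 ≤ a)
    (ν : Measure ℝ) (hν0 : ν (Set.Iic 0) = 0)
    (hνint : ∫⁻ x, ENNReal.ofReal (min x 1) ∂ν < ⊤)
    (hnz : ¬(q = 0 ∧ a = 0 ∧ ν = 0))
    (φ : ℝ → ℝ)
    (hφ : ∀ l : ℝ, 0 ≤ l → φ l = q + a * l + ∫ x, (1 - Real.exp (-(l * x))) ∂ν)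
    (hφpos : ∀ l : ℝ, 0 < l → 0 < φ l)
    (hφdiff : ∀ l : ℝ, 0 < l → DifferentiableAt ℝ φ l) :
    ConcaveOn ℝ (Set.Ioi 0) (fun l => Real.log (φ l)) ∧
    ConcaveOn ℝ (Set.Ioi 0) (fun l => Real.log (l / φ l)) ∧
    (∀ c : ℝ, 0 < c →
      Tendsto (fun s => φ (s + c) / φ s) atTop (𝓝 1)) ∧
    (∀ c : ℝ, 0 < c →
      Tendsto (fun s => ((s + c) / φ (s + c)) / (s / φ s)) atTop (𝓝 1)) := by
  -- a.e. positivity of the support of ν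
  have hae : ∀ᵐ z ∂ν, 0 < z := by
    rw [ae_iff]
    convert hν0 using 2
    ext z
    simp [not_lt]
  -- pointwise nonnegativity
  have hpt : ∀ l z : ℝ, 0 ≤ l → 0 ≤ z → 0 ≤ 1 - Real.exp (-(l*z)) := by
    intro l z hl hz
    have : Real.exp (-(l*z)) ≤ 1 := by
      rw [← Real.exp_zero]
      exact Real.exp_le_exp.2 (by nlinarith)
    linarith
  -- pointwise upper bound
  have hub : ∀ l z : ℝ, 0 ≤ l → 0 < z → 1 - Real.exp (-(l*z)) ≤ max l 1 * min z 1 := by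
    intro l z hl hz
    have h1 : 1 - Real.exp (-(l*z)) ≤ l*z := by
      nlinarith [Real.add_one_le_exp (-(l*z))]
    have h2 : 1 - Real.exp (-(l*z)) ≤ 1 := by
      nlinarith [Real.exp_pos (-(l*z))]
    rcases le_total z 1 with hz1 | hz1
    · rw [min_eq_left hz1]
      calc 1 - Real.exp (-(l*z)) ≤ l*z := h1
        _ ≤ max l 1 * z := by
          exact mul_le_mul_of_nonneg_right (le_max_left l 1) hz.le
    · rw [min_eq_right hz1]
      calc 1 - Real.exp (-(l*z)) ≤ 1 := h2
        _ = 1 * 1 := (one_mul 1).symm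
        _ ≤ max l 1 * 1 := by
          exact mul_le_mul_of_nonneg_right (le_max_right l 1) zero_le_one
  -- integrability
  have hint : ∀ l : ℝ, 0 ≤ l → Integrable (fun z => 1 - Real.exp (-(l*z))) ν := by
    intro l hl
    have hcont : Continuous fun z : ℝ => 1 - Real.exp (-(l*z)) := by continuity
    have hgcont : Continuous fun z : ℝ => max l 1 * min z 1 := by continuity
    have hgint : Integrable (fun z : ℝ => max l 1 * min z 1) ν := by
      refine ⟨hgcont.aestronglyMeasurable, ?_⟩
      rw [hasFiniteIntegral_iff_norm]
      have heq : ∫⁻ z, ENNReal.ofReal ‖max l 1 * min z 1‖ ∂ν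
          = ∫⁻ z, ENNReal.ofReal (max l 1) * ENNReal.ofReal (min z 1) ∂ν := by
        refine lintegral_congr_ae ?_
        filter_upwards [hae] with z hz
        rw [Real.norm_of_nonneg (by positivity), ENNReal.ofReal_mul (by positivity)]
      rw [heq, lintegral_const_mul _
        (show Measurable fun z : ℝ => ENNReal.ofReal (min z 1) by
          exact (measurable_id.min measurable_const).ennreal_ofReal)]
      exact ENNReal.mul_lt_top ENNReal.ofReal_lt_top hνint
    refine hgint.mono' hcont.aestronglyMeasurable ?_
    filter_upwards [hae] with z hz
    rw [Real.norm_of_nonneg (hpt l z hl hz.le)]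
    exact hub l z hl hz
  -- monotonicity of φ on [0, ∞)
  have hφmono : ∀ x y : ℝ, 0 ≤ x → x ≤ y → φ x ≤ φ y := by
    intro x y hx hxy
    rw [hφ x hx, hφ y (hx.trans hxy)]
    have hI : ∫ z, (1 - Real.exp (-(x*z))) ∂ν ≤ ∫ z, (1 - Real.exp (-(y*z))) ∂ν := by
      refine integral_mono_ae (hint x hx) (hint y (hx.trans hxy)) ?_
      filter_upwards [hae] with z hz
      have : Real.exp (-(y*z)) ≤ Real.exp (-(x*z)) :=
        Real.exp_le_exp.2 (by nlinarith)
      linarith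
    have : a * x ≤ a * y := mul_le_mul_of_nonneg_left hxy ha
    linarith
  -- concavity inequality for φ on [0, ∞)
  have hconc : ∀ x y t s : ℝ, 0 ≤ x → 0 ≤ y → 0 ≤ t → 0 ≤ s → t + s = 1 →
      t * φ x + s * φ y ≤ φ (t*x + s*y) := by
    intro x y t s hx hy ht hs hts
    have hw : 0 ≤ t*x + s*y := by positivity
    rw [hφ x hx, hφ y hy, hφ _ hw]
    have hkey : ∫ z, (t*(1 - Real.exp (-(x*z))) + s*(1 - Real.exp (-(y*z)))) ∂ν
        ≤ ∫ z, (1 - Real.exp (-((t*x+s*y)*z))) ∂ν := by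
      refine integral_mono (((hint x hx).const_mul t).add ((hint y hy).const_mul s))
        (hint _ hw) ?_
      intro z
      have hcv := convexOn_exp.2 (Set.mem_univ (-(x*z))) (Set.mem_univ (-(y*z))) ht hs hts
      simp only [smul_eq_mul] at hcv
      have harg : t * -(x*z) + s * -(y*z) = -((t*x+s*y)*z) := by ring
      rw [harg] at hcv
      simp only
      have hexp : t*(1 - Real.exp (-(x*z))) + s*(1 - Real.exp (-(y*z)))
          = (t + s) - (t * Real.exp (-(x*z)) + s * Real.exp (-(y*z))) := by ring
      rw [hexp, hts]
      linarith
    rw [integral_add ((hint x hx).const_mul t) ((hint y hy).const_mul s),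
      integral_const_mul, integral_const_mul] at hkey
    have he : t * (q + a * x + ∫ z, (1 - Real.exp (-(x*z))) ∂ν)
        + s * (q + a * y + ∫ z, (1 - Real.exp (-(y*z))) ∂ν)
        = q + a * (t*x + s*y)
          + (t * ∫ z, (1 - Real.exp (-(x*z))) ∂ν + s * ∫ z, (1 - Real.exp (-(y*z))) ∂ν) := by
      linear_combination (q : ℝ) * hts
    rw [he]
    linarith [hkey]
  -- φ 0 = q
  have hφ0 : φ 0 = q := by
    rw [hφ 0 le_rfl]
    simp
  have hlim : ∀ c : ℝ, 0 < c → Tendsto (fun s => φ (s + c) / φ s) atTop (𝓝 1) := by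
    intro c hc
    have hub' : ∀ᶠ s in atTop, φ (s + c) / φ s ≤ (s + c) / s := by
      filter_upwards [eventually_gt_atTop (0:ℝ)] with s hs
      have hcb := hconc 0 (s+c) (c/(s+c)) (s/(s+c)) le_rfl (by positivity)
        (by positivity) (by positivity) (by field_simp; ring)
      rw [hφ0] at hcb
      have harg : (c/(s+c))*0 + (s/(s+c))*(s+c) = s := by field_simp; ring
      rw [harg] at hcb
      have hscpos : (0:ℝ) < s + c := by linarith
      rw [div_le_div_iff₀ (hφpos s hs) hs]
      have h1 : (s/(s+c)) * φ (s+c) ≤ φ s := by nlinarith [div_nonneg hc.le hscpos.le]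
      calc φ (s+c) * s = ((s/(s+c)) * φ (s+c)) * (s+c) := by field_simp
        _ ≤ φ s * (s+c) := by nlinarith
        _ = (s+c) * φ s := mul_comm _ _
    have hlb : ∀ᶠ s in atTop, 1 ≤ φ (s + c) / φ s := by
      filter_upwards [eventually_gt_atTop (0:ℝ)] with s hs
      rw [le_div_iff₀ (hφpos s hs), one_mul]
      exact hφmono s (s+c) hs.le (by linarith)
    have htop : Tendsto (fun s : ℝ => (s + c) / s) atTop (𝓝 1) := by
      have h0 : Tendsto (fun s : ℝ => 1 + c / s) atTop (𝓝 1) := by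
        have := (tendsto_const_nhds (x := c) (f := atTop (α := ℝ))).div_atTop tendsto_id
        simpa using tendsto_const_nhds.add this
      refine h0.congr' ?_
      filter_upwards [eventually_gt_atTop (0:ℝ)] with s hs
      field_simp
    exact tendsto_of_tendsto_of_tendsto_of_le_of_le' tendsto_const_nhds htop hlb hub'
  refine ⟨?_, ?_, ?_, ?_⟩
  · -- concavity of log ∘ φ
    refine ⟨convex_Ioi 0, fun x hx y hy t s ht hs hts => ?_⟩
    simp only [smul_eq_mul]
    have hx' : (0:ℝ) < x := hx
    have hy' : (0:ℝ) < y := hy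
    have hw : 0 < t*x + s*y := by
      rcases eq_or_lt_of_le ht with h | h
      · rw [← h]; simp only [zero_mul, zero_add]
        have hs1 : s = 1 := by linarith
        rw [hs1, one_mul]; exact hy'
      · nlinarith [mul_pos h hx', mul_nonneg hs hy'.le]
    have h1 : t * φ x + s * φ y ≤ φ (t*x+s*y) := hconc x y t s hx'.le hy'.le ht hs hts
    have h2 : φ x ^ t * φ y ^ s ≤ t * φ x + s * φ y :=
      Real.geom_mean_le_arith_mean2_weighted ht hs (hφpos x hx').le (hφpos y hy').le hts
    calc t * Real.log (φ x) + s * Real.log (φ y)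
        = Real.log (φ x ^ t * φ y ^ s) := by
          rw [Real.log_mul (Real.rpow_pos_of_pos (hφpos x hx') t).ne'
            (Real.rpow_pos_of_pos (hφpos y hy') s).ne',
            Real.log_rpow (hφpos x hx'), Real.log_rpow (hφpos y hy')]
      _ ≤ Real.log (φ (t*x+s*y)) := by
          refine Real.log_le_log ?_ (h2.trans h1)
          exact mul_pos (Real.rpow_pos_of_pos (hφpos x hx') t)
            (Real.rpow_pos_of_pos (hφpos y hy') s)
  · -- concavity of log (l / φ l)
    have hψ : ConvexOn ℝ (Set.Ioi 0) (fun l => Real.log (φ l / l)) := by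
      refine ⟨convex_Ioi 0, fun x hx y hy t s ht hs hts => ?_⟩
      simp only [smul_eq_mul]
      rcases eq_or_lt_of_le ht with h | ht'
      · have hs1 : s = 1 := by linarith
        rw [← h, hs1]; simp
      rcases eq_or_lt_of_le hs with h | hs'
      · have ht1 : t = 1 := by linarith
        rw [← h, ht1]; simp
      have hx' : (0:ℝ) < x := hx
      have hy' : (0:ℝ) < y := hy
      have hw : 0 < t*x + s*y := by positivity
      -- representation of φ l / l
      have hrep : ∀ l : ℝ, 0 < l →
          φ l / l = q/l + a + ∫ z, (1 - Real.exp (-(l*z)))/l ∂ν := by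
        intro l hl
        rw [hφ l hl.le, integral_div, add_div, add_div, mul_div_assoc,
          div_self hl.ne', mul_one]
      -- nonnegativity of the integrals
      have hKnn : ∀ l : ℝ, 0 < l → 0 ≤ᵐ[ν] fun z => (1 - Real.exp (-(l*z)))/l := by
        intro l hl
        filter_upwards [hae] with z hz
        exact div_nonneg (hpt l z hl.le hz.le) hl.le
      have hKint : ∀ l : ℝ, 0 < l → Integrable (fun z => (1 - Real.exp (-(l*z)))/l) ν :=
        fun l hl => (hint l hl.le).div_const l
      -- Hölder for the integral term
      have hT3 : ∫ z, (1 - Real.exp (-((t*x+s*y)*z)))/(t*x+s*y) ∂ν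
          ≤ (∫ z, (1 - Real.exp (-(x*z)))/x ∂ν) ^ t * (∫ z, (1 - Real.exp (-(y*z)))/y ∂ν) ^ s := by
        refine holder2 (hKint _ hw) (hKint x hx') (hKint y hy')
          (hKnn _ hw) (hKnn x hx') (hKnn y hy') ht' hs' hts ?_
        filter_upwards [hae] with z hz
        exact K_holder hx' hy' ht' hs' hts hz
      -- Hölder for q/l term
      have hT1 : q/(t*x+s*y) ≤ (q/x) ^ t * (q/y) ^ s := by
        rcases eq_or_lt_of_le hq with h | hq'
        · rw [← h]; simp [Real.zero_rpow ht'.ne', zero_div]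
        have hxy : x^t * y^s ≤ t*x + s*y :=
          Real.geom_mean_le_arith_mean2_weighted ht hs hx'.le hy'.le hts
        have hxys : 0 < x^t * y^s := by positivity
        calc q/(t*x+s*y) ≤ q/(x^t * y^s) := by gcongr
          _ = (q/x) ^ t * (q/y) ^ s := by
            rw [Real.div_rpow hq hx'.le, Real.div_rpow hq hy'.le,
              div_mul_div_comm, ← Real.rpow_add hq', hts, Real.rpow_one]
      -- a term
      have hT2 : a ≤ a ^ t * a ^ s := by
        rcases eq_or_lt_of_le ha with h | ha'
        · rw [← h]; simp [Real.zero_rpow ht'.ne']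
        rw [← Real.rpow_add ha', hts, Real.rpow_one]
      -- combine with two-term Hölder
      have hIxnn : 0 ≤ ∫ z, (1 - Real.exp (-(x*z)))/x ∂ν := integral_nonneg_of_ae (hKnn x hx')
      have hIynn : 0 ≤ ∫ z, (1 - Real.exp (-(y*z)))/y ∂ν := integral_nonneg_of_ae (hKnn y hy')
      have hP1 : (q/x)^t * (q/y)^s + a^t * a^s ≤ (q/x + a)^t * (q/y + a)^s :=
        holder_pair (by positivity) (by positivity) ha ha ht' hs' hts
      have hP2 : (q/x + a)^t * (q/y + a)^s
            + (∫ z, (1 - Real.exp (-(x*z)))/x ∂ν)^t * (∫ z, (1 - Real.exp (-(y*z)))/y ∂ν)^s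
          ≤ (q/x + a + ∫ z, (1 - Real.exp (-(x*z)))/x ∂ν)^t
            * (q/y + a + ∫ z, (1 - Real.exp (-(y*z)))/y ∂ν)^s :=
        holder_pair (by positivity) (by positivity) hIxnn hIynn ht' hs' hts
      have hmain : φ (t*x+s*y) / (t*x+s*y) ≤ (φ x / x)^t * (φ y / y)^s := by
        rw [hrep _ hw, hrep x hx', hrep y hy']
        calc q/(t*x+s*y) + a + ∫ z, (1 - Real.exp (-((t*x+s*y)*z)))/(t*x+s*y) ∂ν
            ≤ ((q/x)^t * (q/y)^s + a^t * a^s)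
              + (∫ z, (1 - Real.exp (-(x*z)))/x ∂ν)^t * (∫ z, (1 - Real.exp (-(y*z)))/y ∂ν)^s := by
              linarith
          _ ≤ (q/x + a)^t * (q/y + a)^s
              + (∫ z, (1 - Real.exp (-(x*z)))/x ∂ν)^t * (∫ z, (1 - Real.exp (-(y*z)))/y ∂ν)^s := by
              linarith
          _ ≤ _ := hP2
      have hwpos : 0 < φ (t*x+s*y) / (t*x+s*y) := div_pos (hφpos _ hw) hw
      have hxpos : 0 < φ x / x := div_pos (hφpos x hx') hx'
      have hypos : 0 < φ y / y := div_pos (hφpos y hy') hy'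
      calc Real.log (φ (t*x+s*y) / (t*x+s*y)) ≤ Real.log ((φ x / x)^t * (φ y / y)^s) :=
            Real.log_le_log hwpos hmain
        _ = t * Real.log (φ x / x) + s * Real.log (φ y / y) := by
            rw [Real.log_mul (Real.rpow_pos_of_pos hxpos t).ne'
              (Real.rpow_pos_of_pos hypos s).ne',
              Real.log_rpow hxpos, Real.log_rpow hypos]
    have heq : (fun l => Real.log (l / φ l)) = fun l => - Real.log (φ l / l) := by
      funext l
      rw [← Real.log_inv, inv_div]
    rw [heq]
    exact hψ.neg
  · -- third limit
    exact hlim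
  · -- fourth limit
    intro c hc
    have h3 : Tendsto (fun s => φ (s + c) / φ s) atTop (𝓝 1) := hlim c hc
    have htop : Tendsto (fun s : ℝ => (s + c) / s) atTop (𝓝 1) := by
      have h0 : Tendsto (fun s : ℝ => 1 + c / s) atTop (𝓝 1) := by
        have := (tendsto_const_nhds (x := c) (f := atTop (α := ℝ))).div_atTop tendsto_id
        simpa using tendsto_const_nhds.add this
      refine h0.congr' ?_
      filter_upwards [eventually_gt_atTop (0:ℝ)] with s hs
      field_simp
    have hinv : Tendsto (fun s => (φ (s + c) / φ s)⁻¹) atTop (𝓝 1) := by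
      have := h3.inv₀ one_ne_zero
      simpa using this
    have := htop.mul hinv
    rw [mul_one] at this
    refine this.congr' ?_
    filter_upwards [eventually_gt_atTop (0:ℝ)] with s hs
    have hscpos : (0:ℝ) < s + c := by linarith
    field_simp
end
end

section
/- The sequence n ↦ ∑_{j=1}^n φ′(j)/φ(j) − log φ(n) converges as n → ∞, and its limit γ_φ satisfies γ_φ = −log φ(1) + ∫_(0,∞) ( e^{−x} − 1 + x ) · (e^{−x}/(1 − e^{−x})) H(dx), the integral being finite. -/
open MeasureTheory Real Set Filter Topology

noncomputable section

private lemma aux_exp_sub (u v : ℝ) (huv : u ≤ v) :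
    |Real.exp (-u) - Real.exp (-v)| ≤ (v - u) * Real.exp (-u) := by
  have hev : Real.exp (-v) = Real.exp (-u) * Real.exp (-(v - u)) := by
    rw [← Real.exp_add]; ring_nf
  have h1 := Real.add_one_le_exp (-(v - u))
  have h2 : Real.exp (-v) ≤ Real.exp (-u) := Real.exp_le_exp.2 (by linarith)
  rw [abs_of_nonneg (by linarith)]
  nlinarith [Real.exp_pos (-u), Real.exp_pos (-(v - u))]

/-- the sequence `n ↦ ∑_{j=1}^n φ'(j)/φ(j) − log φ(n)` converges, the
integral `∫ (e^{-x} − 1 + x) e^{-x}/(1−e^{-x}) H(dx)` is finite, and the limit equals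
`−log φ(1) + ∫ (e^{-x} − 1 + x) e^{-x}/(1−e^{-x}) H(dx)`. -/
theorem stmt11
    (q a : ℝ) (hq : 0 ≤ q) (ha : 0 ≤ a)
    (ν : Measure ℝ) (hν0 : ν (Set.Iic 0) = 0)
    (hνint : ∫⁻ x, ENNReal.ofReal (min x 1) ∂ν < ⊤)
    (hnz : ¬(q = 0 ∧ a = 0 ∧ ν = 0))
    (φ : ℝ → ℝ)
    (hφ : ∀ l : ℝ, 0 ≤ l → φ l = q + a * l + ∫ x, (1 - Real.exp (-(l * x))) ∂ν)
    (hφpos : ∀ l : ℝ, 0 < l → 0 < φ l)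
    (hφdiff : ∀ l : ℝ, 0 < l → DifferentiableAt ℝ φ l)
    (H : Measure ℝ) (hH0 : H (Set.Iic 0) = 0)
    (hH : ∀ l : ℝ, 0 < l →
      ∫⁻ x, ENNReal.ofReal (x * Real.exp (-(l * x))) ∂H
        = ENNReal.ofReal (deriv φ l / φ l)) :
    Integrable
      (fun x => (Real.exp (-x) - 1 + x) * (Real.exp (-x) / (1 - Real.exp (-x)))) H ∧
    Tendsto
      (fun n : ℕ => (∑ j ∈ Finset.Icc 1 n, deriv φ j / φ j) - Real.log (φ n))
      atTop
      (𝓝 (-Real.log (φ 1) +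
        ∫ x, (Real.exp (-x) - 1 + x) * (Real.exp (-x) / (1 - Real.exp (-x))) ∂H)) := by
  -- a.e. positivity
  have haepos : ∀ (μ : Measure ℝ), μ (Set.Iic 0) = 0 → ∀ᵐ x ∂μ, 0 < x := by
    intro μ h0
    rw [ae_iff]
    have : {x : ℝ | ¬ 0 < x} = Set.Iic 0 := by ext x; simp [not_lt]
    rw [this]; exact h0
  have hHpos : ∀ᵐ x ∂H, 0 < x := haepos H hH0
  have hνpos : ∀ᵐ x ∂ν, 0 < x := haepos ν hν0
  -- continuity/measurability helpers
  have hcexp : ∀ l : ℝ, Continuous fun x : ℝ => Real.exp (-(l * x)) := fun l =>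
    Real.continuous_exp.comp (continuous_const.mul continuous_id).neg
  have hcexp1 : Continuous fun x : ℝ => Real.exp (-x) :=
    Real.continuous_exp.comp continuous_neg
  -- integrability of min x 1 w.r.t. ν
  have hmin_int : Integrable (fun x => min x 1) ν := by
    refine ⟨(measurable_id.min measurable_const).aestronglyMeasurable, ?_⟩
    rw [hasFiniteIntegral_iff_ofReal (hνpos.mono fun x hx => le_min hx.le zero_le_one)]
    exact hνint
  -- integrability of integrand of φ
  have hφint : ∀ l : ℝ, 0 ≤ l → Integrable (fun x => 1 - Real.exp (-(l * x))) ν := by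
    intro l hl
    refine (hmin_int.const_mul (l + 1)).mono' (continuous_const.sub (hcexp l)).aestronglyMeasurable ?_
    filter_upwards [hνpos] with x hx
    have hlx : 0 ≤ l * x := mul_nonneg hl hx.le
    have he1 : Real.exp (-(l * x)) ≤ 1 := Real.exp_le_one_iff.2 (by linarith)
    have he2 := Real.add_one_le_exp (-(l * x))
    rw [Real.norm_eq_abs, abs_of_nonneg (by linarith)]
    rcases le_total x 1 with h | h
    · rw [min_eq_left h]; nlinarith [Real.exp_pos (-(l * x))]
    · rw [min_eq_right h]; nlinarith [Real.exp_pos (-(l * x))]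
  -- monotonicity of φ on (0, ∞)
  have hmono : ∀ l₁ l₂ : ℝ, 0 < l₁ → l₁ ≤ l₂ → φ l₁ ≤ φ l₂ := by
    intro l₁ l₂ h1 h12
    rw [hφ l₁ h1.le, hφ l₂ (h1.le.trans h12)]
    have hI : ∫ x, (1 - Real.exp (-(l₁ * x))) ∂ν ≤ ∫ x, (1 - Real.exp (-(l₂ * x))) ∂ν := by
      refine integral_mono_ae (hφint l₁ h1.le) (hφint l₂ (h1.le.trans h12)) ?_
      filter_upwards [hνpos] with x hx
      have h' : l₁ * x ≤ l₂ * x := mul_le_mul_of_nonneg_right h12 hx.le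
      have h'' := Real.exp_le_exp.2 (neg_le_neg h')
      show 1 - Real.exp (-(l₁ * x)) ≤ 1 - Real.exp (-(l₂ * x))
      linarith
    have : a * l₁ ≤ a * l₂ := mul_le_mul_of_nonneg_left h12 ha
    linarith
  -- derivative of φ is nonneg
  have hderiv_nonneg : ∀ l : ℝ, 0 < l → 0 ≤ deriv φ l := by
    intro l hl
    have hd := (hφdiff l hl).hasDerivAt
    rw [hasDerivAt_iff_tendsto_slope] at hd
    have hd' : Tendsto (slope φ l) (𝓝[>] l) (𝓝 (deriv φ l)) :=
      hd.mono_left (nhdsWithin_mono l fun y hy => ne_of_gt hy)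
    refine ge_of_tendsto hd' ?_
    filter_upwards [self_mem_nhdsWithin] with y (hy : l < y)
    rw [slope_def_field]
    exact div_nonneg (sub_nonneg.2 (hmono l y hl hy.le)) (sub_nonneg.2 hy.le)
  have hg_nonneg : ∀ l : ℝ, 0 < l → 0 ≤ deriv φ l / φ l := fun l hl =>
    div_nonneg (hderiv_nonneg l hl) (hφpos l hl).le
  -- the key integral representation
  have key : ∀ l : ℝ, 0 < l → Integrable (fun x => x * Real.exp (-(l * x))) H ∧
      ∫ x, x * Real.exp (-(l * x)) ∂H = deriv φ l / φ l := by
    intro l hl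
    have hnn : 0 ≤ᵐ[H] fun x => x * Real.exp (-(l * x)) :=
      hHpos.mono fun x hx => by positivity
    have hm : AEStronglyMeasurable (fun x => x * Real.exp (-(l * x))) H :=
      (continuous_id.mul (hcexp l)).aestronglyMeasurable
    have hint : Integrable (fun x => x * Real.exp (-(l * x))) H := by
      refine ⟨hm, ?_⟩
      rw [hasFiniteIntegral_iff_ofReal hnn, hH l hl]
      exact ENNReal.ofReal_lt_top
    refine ⟨hint, ?_⟩
    rw [integral_eq_lintegral_of_nonneg_ae hnn hm, hH l hl,
      ENNReal.toReal_ofReal (hg_nonneg l hl)]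
  -- integrability of x ↦ e^{-x} - e^{-lx}
  have hes_int : ∀ l : ℝ, 0 < l →
      Integrable (fun x => Real.exp (-x) - Real.exp (-(l * x))) H := by
    intro l hl
    have hm : 0 < min 1 l := lt_min one_pos hl
    refine (((key (min 1 l) hm).1.const_mul |l - 1|).mono'
      (hcexp1.sub (hcexp l)).aestronglyMeasurable) ?_
    filter_upwards [hHpos] with x hx
    rw [Real.norm_eq_abs, Pi.sub_apply]
    rcases le_total l 1 with h | h
    · have h1 : l * x ≤ x := by nlinarith
      have h3 : |l - 1| = 1 - l := by rw [abs_sub_comm]; exact abs_of_nonneg (by linarith)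
      rw [min_eq_right h, h3, abs_sub_comm]
      have h2 := aux_exp_sub (l * x) x h1
      have h4 : (x - l * x) * Real.exp (-(l * x)) = (1 - l) * (x * Real.exp (-(l * x))) := by
        ring
      linarith
    · have h1 : x ≤ l * x := by nlinarith
      have h3 : |l - 1| = l - 1 := abs_of_nonneg (by linarith)
      rw [min_eq_left h, one_mul, h3]
      have h2 := aux_exp_sub x (l * x) h1
      have h4 : (l * x - x) * Real.exp (-x) = (l - 1) * (x * Real.exp (-x)) := by ring
      linarith
  -- the function ψ and its derivative
  have hψderiv : ∀ t₀ : ℝ, 0 < t₀ →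
      HasDerivAt (fun t => ∫ x, (Real.exp (-x) - Real.exp (-(t * x))) ∂H)
        (deriv φ t₀ / φ t₀) t₀ := by
    intro t₀ ht₀
    have half : 0 < t₀ / 2 := by linarith
    have hmain := hasDerivAt_integral_of_dominated_loc_of_deriv_le (μ := H)
      (F := fun t x => Real.exp (-x) - Real.exp (-(t * x)))
      (F' := fun t x => x * Real.exp (-(t * x))) (x₀ := t₀)
      (bound := fun x => x * Real.exp (-(t₀ / 2 * x))) (Metric.ball_mem_nhds t₀ half)
      (Eventually.of_forall fun t => (hcexp1.sub (hcexp t)).aestronglyMeasurable)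
      (hes_int t₀ ht₀) (continuous_id.mul (hcexp t₀)).aestronglyMeasurable ?_
      (key (t₀ / 2) half).1 ?_
    · have h2 := hmain.2
      beta_reduce at h2
      rwa [(key t₀ ht₀).2] at h2
    · filter_upwards [hHpos] with x hx t ht
      rw [Metric.mem_ball, Real.dist_eq, abs_lt] at ht
      have htx : t₀ / 2 * x ≤ t * x := by nlinarith
      rw [Real.norm_eq_abs, abs_of_nonneg (by positivity)]
      exact mul_le_mul_of_nonneg_left (Real.exp_le_exp.2 (by linarith)) hx.le
    · refine Eventually.of_forall fun x => fun t _ => ?_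
      have h1 : HasDerivAt (fun t : ℝ => t * x) x t := hasDerivAt_mul_const x
      have h2 := (h1.neg.exp).const_sub (Real.exp (-x))
      simp only [Pi.neg_apply] at h2
      convert h2 using 1
      ring
  -- log φ t = log φ 1 + ψ t for t ≥ 1
  have hlogφ : ∀ t : ℝ, 1 ≤ t →
      Real.log (φ t) = Real.log (φ 1) + ∫ x, (Real.exp (-x) - Real.exp (-(t * x))) ∂H := by
    intro t ht
    have hD : ∀ y ∈ Set.Icc (1 : ℝ) t, HasDerivAt
        (fun s => Real.log (φ s) - ∫ x, (Real.exp (-x) - Real.exp (-(s * x))) ∂H) 0 y := by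
      intro y hy
      have hy0 : 0 < y := lt_of_lt_of_le one_pos hy.1
      have hl := ((hφdiff y hy0).hasDerivAt).log (ne_of_gt (hφpos y hy0))
      have := hl.sub (hψderiv y hy0); rw [sub_self] at this; exact this
    have hc := constant_of_has_deriv_right_zero
      (f := fun s => Real.log (φ s) - ∫ x, (Real.exp (-x) - Real.exp (-(s * x))) ∂H)
      (fun y hy => (hD y hy).continuousAt.continuousWithinAt)
      (fun y hy => (hD y (Set.Ico_subset_Icc_self hy)).hasDerivWithinAt)
      t (Set.right_mem_Icc.2 ht)
    have h1 : ∫ x, (Real.exp (-x) - Real.exp (-(1 * x))) ∂H = 0 := by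
      simp
    beta_reduce at hc
    rw [h1] at hc
    linarith
  -- the sum identity
  have hjpos : ∀ n : ℕ, ∀ j ∈ Finset.Icc 1 n, (0 : ℝ) < (j : ℝ) := by
    intro n j hj
    have : 1 ≤ j := (Finset.mem_Icc.1 hj).1
    exact_mod_cast Nat.lt_of_lt_of_le Nat.zero_lt_one this
  have hsum : ∀ n : ℕ, (∑ j ∈ Finset.Icc 1 n, deriv φ (j : ℝ) / φ (j : ℝ))
      = ∫ x, (∑ j ∈ Finset.Icc 1 n, x * Real.exp (-((j : ℝ) * x))) ∂H := by
    intro n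
    rw [integral_finset_sum _ (fun j hj => (key _ (hjpos n j hj)).1)]
    exact Finset.sum_congr rfl fun j hj => ((key _ (hjpos n j hj)).2).symm
  -- define G_n and G
  set G : ℝ → ℝ := fun x => (Real.exp (-x) - 1 + x) * (Real.exp (-x) / (1 - Real.exp (-x)))
    with hGdef
  set Gn : ℕ → ℝ → ℝ := fun n x =>
    (∑ j ∈ Finset.Icc 1 n, x * Real.exp (-((j : ℝ) * x)))
      - (Real.exp (-x) - Real.exp (-((n : ℝ) * x))) with hGndef
  -- bounds on G_n for x > 0
  have hGn_bounds : ∀ x : ℝ, 0 < x → ∀ n : ℕ, 1 ≤ n →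
      0 ≤ Gn n x ∧ Gn n x ≤ x * Real.exp (-x) := by
    intro x hx
    have hC : ∀ n : ℕ, Real.exp (-x) - Real.exp (-(((n : ℝ) + 1) * x)) ≤
        ∑ j ∈ Finset.Icc 1 n, x * Real.exp (-((j : ℝ) * x)) := by
      intro n
      induction n with
      | zero => simp
      | succ n ih =>
        rw [Finset.sum_Icc_succ_top (Nat.le_add_left 1 n)]
        have h2 := aux_exp_sub (((n : ℝ) + 1) * x) (((n : ℝ) + 1 + 1) * x) (by nlinarith)
        have h2' := (le_abs_self _).trans h2
        have h4 : (((n : ℝ) + 1 + 1) * x - ((n : ℝ) + 1) * x) * Real.exp (-(((n : ℝ) + 1) * x))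
            = x * Real.exp (-(((n : ℝ) + 1) * x)) := by ring
        rw [h4] at h2'
        push_cast
        push_cast at ih
        linarith
    intro n hn
    have hCn := hC n
    have hm2 : Real.exp (-(((n : ℝ) + 1) * x)) ≤ Real.exp (-((n : ℝ) * x)) :=
      Real.exp_le_exp.2 (by nlinarith)
    constructor
    · simp only [hGndef]
      linarith
    · induction n, hn using Nat.le_induction with
      | base =>
        simp only [hGndef, Finset.Icc_self, Finset.sum_singleton, Nat.cast_one, one_mul]
        linarith [Real.exp_pos (-x)]
      | succ n hn ih =>
        have hCn' := hC n
        have hm2' : Real.exp (-(((n : ℝ) + 1) * x)) ≤ Real.exp (-((n : ℝ) * x)) :=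
          Real.exp_le_exp.2 (by nlinarith)
        have ih' := ih hCn' hm2'
        have hE : Real.exp (-((n : ℝ) * x))
            = Real.exp (-(((n : ℝ) + 1) * x)) * Real.exp x := by
          rw [← Real.exp_add]; ring_nf
        have hx1 := Real.add_one_le_exp x
        have hEpos := Real.exp_pos (-(((n : ℝ) + 1) * x))
        have hstep : (∑ j ∈ Finset.Icc 1 (n + 1), x * Real.exp (-((j : ℝ) * x)))
            = (∑ j ∈ Finset.Icc 1 n, x * Real.exp (-((j : ℝ) * x)))
              + x * Real.exp (-(((n : ℝ) + 1) * x)) := by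
          rw [Finset.sum_Icc_succ_top (Nat.le_add_left 1 n)]
          push_cast
          ring
        simp only [hGndef] at ih' ⊢
        push_cast
        push_cast at hstep
        rw [hstep]
        nlinarith
  -- pointwise limit
  have hGn_lim : ∀ x : ℝ, 0 < x → Tendsto (fun n => Gn n x) atTop (𝓝 (G x)) := by
    intro x hx
    set r := Real.exp (-x) with hr
    have hr0 : 0 < r := Real.exp_pos _
    have hr1 : r < 1 := by rw [hr, Real.exp_lt_one_iff]; linarith
    have hrne : r ≠ 1 := ne_of_lt hr1
    have hrj : ∀ j : ℕ, Real.exp (-((j : ℝ) * x)) = r ^ j := by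
      intro j
      rw [hr, ← Real.exp_nat_mul]
      congr 1
      ring
    have hsum_eq : ∀ n : ℕ, (∑ j ∈ Finset.Icc 1 n, x * Real.exp (-((j : ℝ) * x)))
        = x * ((r ^ (n + 1) - 1) / (r - 1) - 1) := by
      intro n
      have h1 : Finset.Icc 1 n = (Finset.range (n + 1)).erase 0 := by
        ext j
        simp [Nat.lt_succ_iff, Nat.one_le_iff_ne_zero]
      simp_rw [hrj]
      rw [← Finset.mul_sum, h1]
      have h2 := Finset.add_sum_erase (Finset.range (n + 1)) (fun j => r ^ j)
        (Finset.mem_range.2 (Nat.succ_pos n))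
      have h3 : ∑ j ∈ (Finset.range (n + 1)).erase 0, r ^ j
          = (∑ j ∈ Finset.range (n + 1), r ^ j) - 1 := by
        rw [← h2]; simp
      rw [h3, geom_sum_eq hrne]
    have hGn_eq : ∀ n : ℕ, Gn n x = x * ((r * r ^ n - 1) / (r - 1) - 1) - (r - r ^ n) := by
      intro n
      simp only [hGndef]
      rw [hsum_eq n, hrj n, ← hr]
      ring
    have hpow : Tendsto (fun n : ℕ => r ^ n) atTop (𝓝 0) :=
      tendsto_pow_atTop_nhds_zero_of_lt_one hr0.le hr1
    have hT : Tendsto (fun n : ℕ => x * ((r * r ^ n - 1) / (r - 1) - 1) - (r - r ^ n)) atTop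
        (𝓝 (x * ((r * 0 - 1) / (r - 1) - 1) - (r - 0))) := by
      exact ((((hpow.const_mul r).sub_const 1).div_const (r - 1)).sub_const 1 |>.const_mul
        x).sub (hpow.const_sub r)
    have hd1 : r - 1 ≠ 0 := by linarith
    have hd2 : 1 - r ≠ 0 := by linarith
    have hval : x * ((r * 0 - 1) / (r - 1) - 1) - (r - 0) = G x := by
      simp only [hGdef, ← hr]
      field_simp
      ring
    have := hT.congr fun n => (hGn_eq n).symm
    rwa [hval] at this
  -- bound on G
  have hG_bound : ∀ x : ℝ, 0 < x → 0 ≤ G x ∧ G x ≤ x * Real.exp (-x) := by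
    intro x hx
    have hr0 : 0 < Real.exp (-x) := Real.exp_pos _
    have hr1 : Real.exp (-x) < 1 := Real.exp_lt_one_iff.2 (by linarith)
    have h1r : 0 < 1 - Real.exp (-x) := by linarith
    have hle := Real.add_one_le_exp (-x)
    have hxe := Real.add_one_le_exp x
    have hrx : Real.exp (-x) * Real.exp x = 1 := by rw [← Real.exp_add]; simp
    constructor
    · simp only [hGdef]
      exact mul_nonneg (by linarith) (div_nonneg hr0.le h1r.le)
    · simp only [hGdef]
      rw [mul_div_assoc', div_le_iff₀ h1r]
      nlinarith [sq_nonneg (Real.exp (-x)), mul_pos hr0 hr0,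
        mul_le_mul_of_nonneg_left hxe (mul_pos hr0 hr0).le]
  -- bound function is integrable
  have hbound_int : Integrable (fun x => x * Real.exp (-x)) H := by
    have := (key 1 one_pos).1
    simpa using this
  -- integrability of G
  have hG_int : Integrable G H := by
    refine hbound_int.mono' (Measurable.aestronglyMeasurable ?_) ?_
    · exact ((hcexp1.measurable.sub measurable_const).add measurable_id).mul
        (hcexp1.measurable.div (measurable_const.sub hcexp1.measurable))
    filter_upwards [hHpos] with x hx
    rw [Real.norm_eq_abs, abs_of_nonneg (hG_bound x hx).1]
    exact (hG_bound x hx).2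
  refine ⟨hG_int, ?_⟩
  -- integrability of G_n
  have hGn_int : ∀ n : ℕ, 1 ≤ n → Integrable (Gn n) H := fun n hn =>
    (integrable_finset_sum _ fun j hj => (key _ (hjpos n j hj)).1).sub
      (hes_int n (by exact_mod_cast Nat.lt_of_lt_of_le Nat.zero_lt_one hn))
  -- main identity for n ≥ 1
  have hmain_eq : ∀ n : ℕ, 1 ≤ n →
      (∑ j ∈ Finset.Icc 1 n, deriv φ (j : ℝ) / φ (j : ℝ)) - Real.log (φ n)
        = -Real.log (φ 1) + ∫ x, Gn n x ∂H := by
    intro n hn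
    have hn' : (1 : ℝ) ≤ (n : ℝ) := by exact_mod_cast hn
    have hnpos : (0 : ℝ) < (n : ℝ) := lt_of_lt_of_le one_pos hn'
    rw [hsum n, hlogφ n hn', hGndef]
    rw [integral_sub (integrable_finset_sum _ fun j hj => (key _ (hjpos n j hj)).1)
      (hes_int n hnpos)]
    ring
  -- dominated convergence
  have hDCT : Tendsto (fun k : ℕ => ∫ x, Gn (k + 1) x ∂H) atTop (𝓝 (∫ x, G x ∂H)) := by
    refine tendsto_integral_of_dominated_convergence (fun x => x * Real.exp (-x))
      (fun k => (hGn_int (k + 1) (Nat.le_add_left 1 k)).1) hbound_int ?_ ?_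
    · intro k
      filter_upwards [hHpos] with x hx
      rw [Real.norm_eq_abs, abs_of_nonneg (hGn_bounds x hx (k + 1) (Nat.le_add_left 1 k)).1]
      exact (hGn_bounds x hx (k + 1) (Nat.le_add_left 1 k)).2
    · filter_upwards [hHpos] with x hx
      exact (hGn_lim x hx).comp (tendsto_add_atTop_nat 1)
  rw [← tendsto_add_atTop_iff_nat 1]
  refine Tendsto.congr' ?_ (tendsto_const_nhds.add hDCT)
  filter_upwards [] with k
  rw [← hmain_eq (k + 1) (Nat.le_add_left 1 k)]
end
end

section
/- For every Borel set A ⊆ (0,∞): ∫_A x H(dx) = a · V(A) + ∫_[0,∞) ∫_(0,∞) 1_A(x+y) · y Π(dy) V(dx); that is, on (0,∞) the measure x H(dx) equals a V(dx) plus the convolution of the measure y Π(dy) with V. In particular, when a = 0, x H(dx) = ∫_{[0,x]} Π(dy) y V(dx−y). -/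
open MeasureTheory Real Set Filter Topology

open scoped ENNReal NNReal

noncomputable section

lemma moments_ext (κ₁ κ₂ : Measure ℝ) [IsFiniteMeasure κ₁] [IsFiniteMeasure κ₂]
    (h₁ : κ₁ (Set.Icc 0 1)ᶜ = 0) (h₂ : κ₂ (Set.Icc 0 1)ᶜ = 0)
    (hm : ∀ n : ℕ, ∫ t, t ^ n ∂κ₁ = ∫ t, t ^ n ∂κ₂) : κ₁ = κ₂ := by
  have hae₁ : ∀ᵐ x ∂κ₁, x ∈ Set.Icc (0:ℝ) 1 := by
    rw [MeasureTheory.ae_iff]; exact h₁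
  have hae₂ : ∀ᵐ x ∂κ₂, x ∈ Set.Icc (0:ℝ) 1 := by
    rw [MeasureTheory.ae_iff]; exact h₂
  -- integrability of powers
  have hpow : ∀ (κ : Measure ℝ) [IsFiniteMeasure κ], (∀ᵐ x ∂κ, x ∈ Set.Icc (0:ℝ) 1) →
      ∀ n : ℕ, Integrable (fun x : ℝ => x ^ n) κ := by
    intro κ _ hae n
    refine ⟨(continuous_pow n).aestronglyMeasurable, HasFiniteIntegral.of_bounded (C := 1) ?_⟩
    filter_upwards [hae] with x hx
    rw [Real.norm_eq_abs, abs_pow]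
    exact pow_le_one₀ (abs_nonneg x) (abs_le.2 ⟨by linarith [hx.1], hx.2⟩)
  -- polynomials are integrable and have equal integrals
  have hpoly : ∀ p : Polynomial ℝ,
      (Integrable (fun x : ℝ => p.eval x) κ₁ ∧ Integrable (fun x : ℝ => p.eval x) κ₂) ∧
        ∫ x, p.eval x ∂κ₁ = ∫ x, p.eval x ∂κ₂ := by
    intro p
    have hev : ∀ x : ℝ, p.eval x =
        ∑ i ∈ Finset.range (p.natDegree + 1), p.coeff i * x ^ i := fun x =>
      Polynomial.eval_eq_sum_range x
    have hint : ∀ (κ : Measure ℝ) [IsFiniteMeasure κ], (∀ᵐ x ∂κ, x ∈ Set.Icc (0:ℝ) 1) →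
        Integrable (fun x : ℝ => p.eval x) κ := by
      intro κ _ hae
      have : Integrable (fun x : ℝ =>
          ∑ i ∈ Finset.range (p.natDegree + 1), p.coeff i * x ^ i) κ :=
        integrable_finset_sum _ (fun i _ => (hpow κ hae i).const_mul _)
      simpa [← hev] using this
    refine ⟨⟨hint κ₁ hae₁, hint κ₂ hae₂⟩, ?_⟩
    have key : ∀ (κ : Measure ℝ) [IsFiniteMeasure κ], (∀ᵐ x ∂κ, x ∈ Set.Icc (0:ℝ) 1) →
        ∫ x, p.eval x ∂κ =
          ∑ i ∈ Finset.range (p.natDegree + 1), p.coeff i * ∫ x, x ^ i ∂κ := by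
      intro κ _ hae
      simp_rw [hev]
      rw [integral_finset_sum _ (fun i _ => (hpow κ hae i).const_mul _)]
      exact Finset.sum_congr rfl fun i _ => integral_const_mul _ _
    rw [key κ₁ hae₁, key κ₂ hae₂]
    exact Finset.sum_congr rfl fun i _ => by rw [hm i]
  -- continuous bounded functions have equal integrals
  apply ext_of_forall_lintegral_eq_of_IsFiniteMeasure
  intro f
  have hgint₁ := f.integrable_of_nnreal (μ := κ₁)
  have hgint₂ := f.integrable_of_nnreal (μ := κ₂)
  have key : ∫ t, (f t : ℝ) ∂κ₁ = ∫ t, (f t : ℝ) ∂κ₂ := by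
    set g : ℝ → ℝ := fun t => (f t : ℝ) with hg
    have hgcont : Continuous g := NNReal.continuous_coe.comp f.continuous
    set C : ℝ := (κ₁ Set.univ).toReal + (κ₂ Set.univ).toReal with hC
    have hC0 : 0 ≤ C := add_nonneg ENNReal.toReal_nonneg ENNReal.toReal_nonneg
    have hmain : ∀ ε : ℝ, 0 < ε → |∫ t, g t ∂κ₁ - ∫ t, g t ∂κ₂| ≤ ε * C := by
      intro ε hε
      obtain ⟨p, hp⟩ := exists_polynomial_near_of_continuousOn 0 1 g
        hgcont.continuousOn ε hε
      obtain ⟨⟨hpint₁, hpint₂⟩, hpeq⟩ := hpoly p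
      have hd : ∀ (κ : Measure ℝ) [IsFiniteMeasure κ], (∀ᵐ x ∂κ, x ∈ Set.Icc (0:ℝ) 1) →
          Integrable g κ → Integrable (fun x : ℝ => p.eval x) κ →
          |∫ t, g t ∂κ - ∫ x, p.eval x ∂κ| ≤ ε * (κ Set.univ).toReal := by
        intro κ _ hae hgi hpi
        rw [← integral_sub hgi hpi]
        have := norm_integral_le_of_norm_le_const (μ := κ)
          (f := fun x => g x - p.eval x) (C := ε) ?_
        · simpa [Real.norm_eq_abs, measureReal_def] using this
        · filter_upwards [hae] with x hx
          rw [Real.norm_eq_abs, abs_sub_comm]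
          exact le_of_lt (hp x hx)
      calc |∫ t, g t ∂κ₁ - ∫ t, g t ∂κ₂|
          = |(∫ t, g t ∂κ₁ - ∫ x, p.eval x ∂κ₁) - (∫ t, g t ∂κ₂ - ∫ x, p.eval x ∂κ₂)| := by
            rw [hpeq]; ring_nf
        _ ≤ |∫ t, g t ∂κ₁ - ∫ x, p.eval x ∂κ₁| + |∫ t, g t ∂κ₂ - ∫ x, p.eval x ∂κ₂| :=
            abs_sub _ _
        _ ≤ ε * (κ₁ Set.univ).toReal + ε * (κ₂ Set.univ).toReal :=
            add_le_add (hd κ₁ hae₁ hgint₁ hpint₁) (hd κ₂ hae₂ hgint₂ hpint₂)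
        _ = ε * C := by rw [hC]; ring
    have : |∫ t, g t ∂κ₁ - ∫ t, g t ∂κ₂| ≤ 0 := by
      refine le_of_forall_pos_le_add fun ε hε => ?_
      have h1 : (0:ℝ) < ε / (C + 1) := by positivity
      have := hmain (ε / (C + 1)) h1
      have h2 : ε / (C + 1) * C ≤ ε := by
        rw [div_mul_eq_mul_div, div_le_iff₀ (by linarith)]
        nlinarith
      linarith
    have := abs_nonneg (∫ t, g t ∂κ₁ - ∫ t, g t ∂κ₂)
    have : |∫ t, g t ∂κ₁ - ∫ t, g t ∂κ₂| = 0 := le_antisymm ‹_› ‹_›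
    linarith [abs_eq_zero.mp this, sub_eq_zero.mp (abs_eq_zero.mp this)]
  rw [lintegral_coe_eq_integral f hgint₁, lintegral_coe_eq_integral f hgint₂, key]

/-- Laplace transform uniqueness for finite measures on `[0,∞)`. -/
lemma laplace_ext_fin (μ₁ μ₂ : Measure ℝ) [IsFiniteMeasure μ₁] [IsFiniteMeasure μ₂]
    (h₁ : μ₁ (Set.Iio 0) = 0) (h₂ : μ₂ (Set.Iio 0) = 0)
    (heq : ∀ l : ℝ, 0 < l →
      ∫⁻ x, ENNReal.ofReal (Real.exp (-(l * x))) ∂μ₁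
        = ∫⁻ x, ENNReal.ofReal (Real.exp (-(l * x))) ∂μ₂) : μ₁ = μ₂ := by
  have hae₁ : ∀ᵐ x ∂μ₁, (0:ℝ) ≤ x := by
    rw [MeasureTheory.ae_iff]; simpa [not_le, Set.Iio_def] using h₁
  have hae₂ : ∀ᵐ x ∂μ₂, (0:ℝ) ≤ x := by
    rw [MeasureTheory.ae_iff]; simpa [not_le, Set.Iio_def] using h₂
  -- total masses are equal, via monotone convergence as l ↓ 0
  have hmass : μ₁ Set.univ = μ₂ Set.univ := by
    have key : ∀ (μ : Measure ℝ), (∀ᵐ x ∂μ, (0:ℝ) ≤ x) →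
        μ Set.univ = ⨆ n : ℕ, ∫⁻ x, ENNReal.ofReal (Real.exp (-((1/(n+1)) * x))) ∂μ := by
      intro μ hae
      have h1 : ∀ n : ℕ, AEMeasurable
          (fun x : ℝ => ENNReal.ofReal (Real.exp (-((1/(n+1:ℝ)) * x)))) μ :=
        fun n => (ENNReal.measurable_ofReal.comp
          ((Real.continuous_exp.comp (by fun_prop)).measurable)).aemeasurable
      have h2 : ∀ᵐ x ∂μ, Monotone fun n : ℕ =>
          ENNReal.ofReal (Real.exp (-((1/(n+1:ℝ)) * x))) := by
        filter_upwards [hae] with x hx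
        intro m n hmn
        apply ENNReal.ofReal_le_ofReal
        apply Real.exp_le_exp.2
        have : (1:ℝ)/(n+1) ≤ 1/(m+1) := by
          apply one_div_le_one_div_of_le (by positivity)
          exact_mod_cast by omega
        nlinarith
      rw [← MeasureTheory.lintegral_iSup' h1 h2]
      rw [show μ Set.univ = ∫⁻ _, 1 ∂μ by simp]
      apply lintegral_congr_ae
      filter_upwards [hae] with x hx
      have hlim : Filter.Tendsto (fun n : ℕ => Real.exp (-((1/(n+1:ℝ)) * x)))
          Filter.atTop (nhds 1) := by
        have : Filter.Tendsto (fun n : ℕ => -((1/(n+1:ℝ)) * x)) Filter.atTop (nhds 0) := by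
          have : Filter.Tendsto (fun n : ℕ => 1 / ((n:ℝ) + 1)) Filter.atTop (nhds 0) :=
            tendsto_one_div_add_atTop_nhds_zero_nat
          have := this.mul_const x
          simpa using this.neg
        simpa [Function.comp_def] using (Real.continuous_exp.continuousAt.tendsto.comp this)
      have hmono : Monotone fun n : ℕ => ENNReal.ofReal (Real.exp (-((1/(n+1:ℝ)) * x))) := by
        intro m n hmn
        apply ENNReal.ofReal_le_ofReal
        apply Real.exp_le_exp.2
        have : (1:ℝ)/(n+1) ≤ 1/(m+1) := by
          apply one_div_le_one_div_of_le (by positivity)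
          exact_mod_cast by omega
        nlinarith
      have hlim' : Filter.Tendsto (fun n : ℕ =>
          ENNReal.ofReal (Real.exp (-((1/(n+1:ℝ)) * x)))) Filter.atTop (nhds 1) := by
        have := (ENNReal.continuous_ofReal.continuousAt.tendsto).comp hlim
        simpa [Function.comp_def] using this
      exact (tendsto_nhds_unique hlim' (tendsto_atTop_iSup hmono))
    rw [key μ₁ hae₁, key μ₂ hae₂]
    exact iSup_congr fun n => heq _ (by positivity)
  -- push forward under x ↦ exp (-x)
  set g : ℝ → ℝ := fun x => Real.exp (-x) with hgdef
  have hgcont : Continuous g := Real.continuous_exp.comp continuous_neg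
  have hginj : Function.Injective g := fun a b hab => by
    have := Real.exp_injective hab; linarith
  have hge : MeasurableEmbedding g := hgcont.measurableEmbedding hginj
  set κ₁ : Measure ℝ := Measure.map g μ₁ with hκ₁
  set κ₂ : Measure ℝ := Measure.map g μ₂ with hκ₂
  haveI : IsFiniteMeasure κ₁ := by rw [hκ₁]; exact Measure.isFiniteMeasure_map μ₁ g
  haveI : IsFiniteMeasure κ₂ := by rw [hκ₂]; exact Measure.isFiniteMeasure_map μ₂ g
  have hpre : g ⁻¹' (Set.Icc (0:ℝ) 1)ᶜ = Set.Iio 0 := by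
    ext x
    simp only [Set.mem_preimage, Set.mem_compl_iff, Set.mem_Icc, Set.mem_Iio, hgdef]
    constructor
    · intro h
      by_contra hx
      push_neg at hx
      exact h ⟨(Real.exp_pos _).le, Real.exp_le_one_iff.2 (by linarith)⟩
    · intro hx ⟨_, h1⟩
      rw [Real.exp_le_one_iff] at h1
      linarith
  have hc₁ : κ₁ (Set.Icc (0:ℝ) 1)ᶜ = 0 := by
    rw [hκ₁, hge.map_apply, hpre]; exact h₁
  have hc₂ : κ₂ (Set.Icc (0:ℝ) 1)ᶜ = 0 := by
    rw [hκ₂, hge.map_apply, hpre]; exact h₂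
  have hmom : ∀ n : ℕ, ∫ t, t ^ n ∂κ₁ = ∫ t, t ^ n ∂κ₂ := by
    intro n
    have hpush : ∀ (μ : Measure ℝ), ∫ t, t ^ n ∂(Measure.map g μ) =
        ∫ x, Real.exp (-x) ^ n ∂μ := fun μ =>
      integral_map hgcont.measurable.aemeasurable (continuous_pow n).aestronglyMeasurable
    rw [hκ₁, hκ₂, hpush, hpush]
    rcases Nat.eq_zero_or_pos n with hn | hn
    · simp [hn, hmass, measureReal_def]
    · have hexp : ∀ x : ℝ, Real.exp (-x) ^ n = Real.exp (-((n:ℝ) * x)) := by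
        intro x
        rw [← Real.exp_nat_mul]; ring_nf
      simp_rw [hexp]
      have hbridge : ∀ (μ : Measure ℝ) [IsFiniteMeasure μ], (∀ᵐ x ∂μ, (0:ℝ) ≤ x) →
          ∫ x, Real.exp (-((n:ℝ) * x)) ∂μ =
            (∫⁻ x, ENNReal.ofReal (Real.exp (-((n:ℝ) * x))) ∂μ).toReal := by
        intro μ _ hae
        rw [← MeasureTheory.ofReal_integral_eq_lintegral_ofReal, ENNReal.toReal_ofReal]
        · exact integral_nonneg fun x => (Real.exp_pos _).le
        · refine ⟨(Real.continuous_exp.comp (by fun_prop)).aestronglyMeasurable,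
            HasFiniteIntegral.of_bounded (C := (1:ℝ)) ?_⟩
          filter_upwards [hae] with x hx
          rw [Real.norm_eq_abs, abs_of_pos (Real.exp_pos _)]
          rw [← Real.exp_zero]
          apply Real.exp_le_exp.2
          have : (0:ℝ) ≤ (n:ℝ) * x := mul_nonneg (Nat.cast_nonneg n) hx
          linarith
        · exact Filter.Eventually.of_forall fun x => (Real.exp_pos _).le
      rw [hbridge μ₁ hae₁, hbridge μ₂ hae₂, heq (n:ℝ) (by exact_mod_cast hn)]
  have := moments_ext κ₁ κ₂ hc₁ hc₂ hmom
  ext s _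
  have e1 : μ₁ s = κ₁ (g '' s) := by
    rw [hκ₁, hge.map_apply, Set.preimage_image_eq _ hginj]
  have e2 : μ₂ s = κ₂ (g '' s) := by
    rw [hκ₂, hge.map_apply, Set.preimage_image_eq _ hginj]
  rw [e1, e2, this]

/-- Laplace transform uniqueness for measures on `[0,∞)` with finite transforms. -/
lemma laplace_ext (μ₁ μ₂ : Measure ℝ)
    (h₁ : μ₁ (Set.Iio 0) = 0) (h₂ : μ₂ (Set.Iio 0) = 0)
    (hfin : ∫⁻ x, ENNReal.ofReal (Real.exp (-(1 * x))) ∂μ₁ ≠ ⊤)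
    (heq : ∀ l : ℝ, 0 < l →
      ∫⁻ x, ENNReal.ofReal (Real.exp (-(l * x))) ∂μ₁
        = ∫⁻ x, ENNReal.ofReal (Real.exp (-(l * x))) ∂μ₂) : μ₁ = μ₂ := by
  set w : ℝ → ℝ≥0∞ := fun x => ENNReal.ofReal (Real.exp (-(1 * x))) with hwdef
  have hwm : Measurable w := ENNReal.measurable_ofReal.comp
    (Real.continuous_exp.comp (by fun_prop)).measurable
  set w' : ℝ → ℝ≥0∞ := fun x => ENNReal.ofReal (Real.exp x) with hw'def
  have hw'm : Measurable w' := ENNReal.measurable_ofReal.comp Real.continuous_exp.measurable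
  set μ₁' := μ₁.withDensity w with hμ₁'
  set μ₂' := μ₂.withDensity w with hμ₂'
  -- Laplace transforms of the weighted measures
  have hlap : ∀ (μ : Measure ℝ) (l : ℝ),
      ∫⁻ x, ENNReal.ofReal (Real.exp (-(l * x))) ∂(μ.withDensity w)
        = ∫⁻ x, ENNReal.ofReal (Real.exp (-((l + 1) * x))) ∂μ := by
    intro μ l
    have hg : Measurable (fun x : ℝ => ENNReal.ofReal (Real.exp (-(l * x)))) :=
      ENNReal.measurable_ofReal.comp
        (Real.continuous_exp.comp (continuous_const.mul continuous_id').neg).measurable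
    rw [lintegral_withDensity_eq_lintegral_mul μ hwm hg]
    apply lintegral_congr
    intro x
    simp only [Pi.mul_apply, hwdef]
    rw [← ENNReal.ofReal_mul (Real.exp_pos _).le, ← Real.exp_add]
    ring_nf
  haveI : IsFiniteMeasure μ₁' := by
    constructor
    rw [hμ₁', withDensity_apply _ MeasurableSet.univ, Measure.restrict_univ]
    exact lt_top_iff_ne_top.2 hfin
  haveI : IsFiniteMeasure μ₂' := by
    constructor
    rw [hμ₂', withDensity_apply _ MeasurableSet.univ, Measure.restrict_univ]
    rw [hwdef, ← heq 1 one_pos]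
    exact lt_top_iff_ne_top.2 hfin
  have hz : ∀ (μ : Measure ℝ), μ (Set.Iio 0) = 0 → (μ.withDensity w) (Set.Iio 0) = 0 := by
    intro μ hμ
    rw [withDensity_apply _ measurableSet_Iio, Measure.restrict_eq_zero.2 hμ]
    simp
  have hfeq := laplace_ext_fin μ₁' μ₂' (hz μ₁ h₁) (hz μ₂ h₂) ?_
  · have hrec : ∀ (μ : Measure ℝ), (μ.withDensity w).withDensity w' = μ := by
      intro μ
      rw [← withDensity_mul μ hwm hw'm]
      have : w * w' = 1 := by
        funext x
        simp only [Pi.mul_apply, Pi.one_apply, hwdef, hw'def]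
        rw [← ENNReal.ofReal_mul (Real.exp_pos _).le, ← Real.exp_add]
        norm_num
      rw [this, withDensity_one]
    rw [← hrec μ₁, ← hrec μ₂, ← hμ₁', ← hμ₂', hfeq]
  · intro l hl
    rw [hμ₁', hμ₂', hlap, hlap]
    exact heq (l + 1) (by linarith)

lemma min_integrable (ν : Measure ℝ) (hν0 : ν (Set.Iic 0) = 0)
    (hνint : ∫⁻ x, ENNReal.ofReal (min x 1) ∂ν < ⊤) :
    Integrable (fun x : ℝ => min x 1) ν := by
  have haeν : ∀ᵐ x ∂ν, (0:ℝ) < x := by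
    rw [MeasureTheory.ae_iff]; simpa [not_lt, Set.Iic_def] using hν0
  refine ⟨(continuous_id.min continuous_const).aestronglyMeasurable, ?_⟩
  rw [MeasureTheory.hasFiniteIntegral_iff_norm]
  have : ∫⁻ x, ENNReal.ofReal ‖min x 1‖ ∂ν = ∫⁻ x, ENNReal.ofReal (min x 1) ∂ν := by
    apply lintegral_congr_ae
    filter_upwards [haeν] with x hx
    rw [Real.norm_eq_abs, abs_of_pos (lt_min hx one_pos)]
  rw [this]
  exact hνint

lemma deriv_phi (q a : ℝ) (ν : Measure ℝ) (hν0 : ν (Set.Iic 0) = 0)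
    (hνint : ∫⁻ x, ENNReal.ofReal (min x 1) ∂ν < ⊤)
    (φ : ℝ → ℝ)
    (hφ : ∀ l : ℝ, 0 ≤ l → φ l = q + a * l + ∫ x, (1 - Real.exp (-(l * x))) ∂ν)
    (l : ℝ) (hl : 0 < l) :
    Integrable (fun x => x * Real.exp (-(l * x))) ν ∧
      HasDerivAt φ (a + ∫ x, x * Real.exp (-(l * x)) ∂ν) l := by
  have haeν : ∀ᵐ x ∂ν, (0:ℝ) < x := by
    rw [MeasureTheory.ae_iff]; simpa [not_lt, Set.Iic_def] using hν0
  have hB : Integrable (fun x : ℝ => min x 1) ν := min_integrable ν hν0 hνint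
  set C : ℝ := max 1 (16 / (l * l)) with hCdef
  have hC1 : (1:ℝ) ≤ C := le_max_left _ _
  -- the exponential quadratic lower bound
  have hquad : ∀ u : ℝ, 0 ≤ u → u ^ 2 / 4 ≤ Real.exp u := by
    intro u hu
    have h1 : Real.exp (u / 2) ^ 2 = Real.exp u := by
      rw [sq, ← Real.exp_add]; norm_num
    have h2 : u / 2 + 1 ≤ Real.exp (u / 2) := Real.add_one_le_exp _
    nlinarith [Real.exp_pos (u / 2)]
  -- the key bound for the derivative
  have hkey : ∀ x : ℝ, 0 < x → ∀ lam : ℝ, l / 2 ≤ lam →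
      x * Real.exp (-(lam * x)) ≤ C * min x 1 := by
    intro x hx lam hlam
    have hl2 : 0 < l / 2 := by linarith
    have hlampos : 0 < lam := lt_of_lt_of_le hl2 hlam
    have hmono : Real.exp (-(lam * x)) ≤ Real.exp (-(l / 2 * x)) := by
      apply Real.exp_le_exp.2; nlinarith
    rcases le_or_gt x 1 with hx1 | hx1
    · have : x * Real.exp (-(lam * x)) ≤ x := by
        nlinarith [Real.exp_le_one_iff.2 (by nlinarith : -(lam * x) ≤ 0), Real.exp_pos (-(lam * x))]
      calc x * Real.exp (-(lam * x)) ≤ x := this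
        _ = min x 1 := (min_eq_left hx1).symm
        _ ≤ C * min x 1 := by nlinarith [lt_min hx one_pos]
    · have hmin : min x 1 = 1 := min_eq_right hx1.le
      have hq := hquad (l / 2 * x) (by nlinarith)
      have hexppos := Real.exp_pos (l / 2 * x)
      have hrw : Real.exp (-(l / 2 * x)) = (Real.exp (l / 2 * x))⁻¹ := by
        rw [Real.exp_neg]
      have hll : 0 < l * l := mul_pos hl hl
      have h4 : x * Real.exp (-(l / 2 * x)) ≤ 16 / (l * l) := by
        rw [hrw, mul_inv_le_iff₀ hexppos]
        have key2 : 16 / (l * l) * ((l / 2 * x) ^ 2 / 4) = x ^ 2 := by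
          field_simp; ring
        have h5 : 16 / (l * l) * ((l / 2 * x) ^ 2 / 4) ≤ 16 / (l * l) * Real.exp (l / 2 * x) :=
          mul_le_mul_of_nonneg_left hq (by positivity)
        rw [key2] at h5
        nlinarith
      calc x * Real.exp (-(lam * x)) ≤ x * Real.exp (-(l / 2 * x)) := by nlinarith
        _ ≤ 16 / (l * l) := h4
        _ = (16 / (l * l)) * min x 1 := by rw [hmin, mul_one]
        _ ≤ C * min x 1 := by
            rw [hmin, mul_one, mul_one]; exact le_max_right (1:ℝ) (16 / (l * l))
  -- integrability of F l
  have hFint : Integrable (fun x : ℝ => 1 - Real.exp (-(l * x))) ν := by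
    apply Integrable.mono' (hB.const_mul (max l 1))
    · exact (continuous_const.sub
        (Real.continuous_exp.comp (continuous_const.mul continuous_id').neg)).aestronglyMeasurable
    · filter_upwards [haeν] with x hx
      have h1 : Real.exp (-(l * x)) ≤ 1 := Real.exp_le_one_iff.2 (by nlinarith)
      have h2 : 1 - l * x ≤ Real.exp (-(l * x)) := by
        have := Real.add_one_le_exp (-(l * x)); linarith
      rw [Real.norm_eq_abs, abs_of_nonneg (by linarith)]
      rcases le_or_gt x 1 with hx1 | hx1
      · have : min x 1 = x := min_eq_left hx1
        rw [this]
        nlinarith [le_max_left l 1, le_max_right l 1]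
      · have : min x 1 = 1 := min_eq_right hx1.le
        rw [this]
        nlinarith [le_max_right l 1, Real.exp_pos (-(l * x))]
  -- apply dominated differentiation
  have hmain := hasDerivAt_integral_of_dominated_loc_of_deriv_le
    (F := fun (lam : ℝ) (x : ℝ) => 1 - Real.exp (-(lam * x)))
    (F' := fun (lam : ℝ) (x : ℝ) => x * Real.exp (-(lam * x)))
    (x₀ := l) (bound := fun x => C * min x 1) (μ := ν)
    (Metric.ball_mem_nhds l (half_pos hl))
    (Filter.Eventually.of_forall fun lam => (continuous_const.sub
      (Real.continuous_exp.comp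
        (continuous_const.mul continuous_id').neg)).aestronglyMeasurable)
    hFint
    ((continuous_id'.mul (Real.continuous_exp.comp
      (continuous_const.mul continuous_id').neg)).aestronglyMeasurable)
    ?_ (hB.const_mul C) ?_
  · obtain ⟨hint, hder⟩ := hmain
    refine ⟨hint, ?_⟩
    have hq : HasDerivAt (fun lam : ℝ => q + a * lam +
        ∫ x, (1 - Real.exp (-(lam * x))) ∂ν)
        (a + ∫ x, x * Real.exp (-(l * x)) ∂ν) l := by
      have h1 : HasDerivAt (fun lam : ℝ => q + a * lam) a l := by
        simpa using ((hasDerivAt_id l).const_mul a).const_add q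
      exact h1.add hder
    apply hq.congr_of_eventuallyEq
    filter_upwards [isOpen_Ioi.mem_nhds hl] with lam (hlam : 0 < lam)
    exact hφ lam hlam.le
  · filter_upwards [haeν] with x hx
    intro lam hlam
    rw [Metric.mem_ball, Real.dist_eq] at hlam
    have : l / 2 ≤ lam := by
      rcases abs_lt.1 hlam with ⟨h1, h2⟩; linarith
    rw [Real.norm_eq_abs, abs_of_nonneg (by positivity)]
    exact hkey x hx lam this
  · filter_upwards with x
    intro lam _
    have h0 : HasDerivAt (fun lam : ℝ => -(lam * x)) (-x) lam := by
      simpa [Pi.neg_def] using ((hasDerivAt_id lam).mul_const x).neg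
    have h1 := (h0.exp).const_sub 1
    convert h1 using 1
    ring

lemma nu_sigmaFinite (ν : Measure ℝ) (hν0 : ν (Set.Iic 0) = 0)
    (hνint : ∫⁻ x, ENNReal.ofReal (min x 1) ∂ν < ⊤) : SigmaFinite ν := by
  have hIci : ∀ n : ℕ, ν (Set.Ici (1 / (n + 1 : ℝ))) < ⊤ := by
    intro n
    set ε : ℝ := 1 / (n + 1 : ℝ) with hε
    have hε0 : 0 < ε := by positivity
    have hε1 : ε ≤ 1 := by
      rw [hε, div_le_one (by positivity)]
      exact_mod_cast by omega
    have hb : ENNReal.ofReal ε * ν (Set.Ici ε) ≤ ∫⁻ x, ENNReal.ofReal (min x 1) ∂ν := by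
      calc ENNReal.ofReal ε * ν (Set.Ici ε)
          = ∫⁻ _ in Set.Ici ε, ENNReal.ofReal ε ∂ν := by
            rw [MeasureTheory.setLIntegral_const]
        _ ≤ ∫⁻ x in Set.Ici ε, ENNReal.ofReal (min x 1) ∂ν := by
            apply MeasureTheory.setLIntegral_mono
              (ENNReal.measurable_ofReal.comp (continuous_id.min continuous_const).measurable)
            intro x hx
            exact ENNReal.ofReal_le_ofReal (le_min hx hε1)
        _ ≤ ∫⁻ x, ENNReal.ofReal (min x 1) ∂ν := MeasureTheory.setLIntegral_le_lintegral _ _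
    by_contra hcon
    push_neg at hcon
    rw [top_le_iff.1 hcon, ENNReal.mul_top (by simpa using hε0)] at hb
    exact lt_irrefl ⊤ (lt_of_le_of_lt hb hνint)
  exact ⟨⟨⟨fun n => Set.Iic 0 ∪ Set.Ici (1 / (n + 1 : ℝ)),
    fun _ => trivial,
    fun n => by
      apply lt_of_le_of_lt (measure_union_le _ _)
      rw [hν0, zero_add]
      exact hIci n,
    by
      ext x
      simp only [Set.mem_iUnion, Set.mem_union, Set.mem_Iic, Set.mem_Ici, Set.mem_univ,
        iff_true]
      rcases le_or_gt x 0 with hx | hx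
      · exact ⟨0, Or.inl hx⟩
      · obtain ⟨n, hn⟩ := exists_nat_one_div_lt hx
        exact ⟨n, Or.inr hn.le⟩⟩⟩⟩


/-- for every Borel `A ⊆ (0,∞)`,
`∫_A x H(dx) = a V(A) + ∬ 1_A(x+y) y Π(dy) V(dx)`; i.e. on `(0,∞)` the measure
`x H(dx)` is `a V(dx)` plus the convolution of `y Π(dy)` with `V`. -/
theorem stmt15
    (q a : ℝ) (hq : 0 ≤ q) (ha : 0 ≤ a)
    (ν : Measure ℝ) (hν0 : ν (Set.Iic 0) = 0)
    (hνint : ∫⁻ x, ENNReal.ofReal (min x 1) ∂ν < ⊤)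
    (hnz : ¬(q = 0 ∧ a = 0 ∧ ν = 0))
    (φ : ℝ → ℝ)
    (hφ : ∀ l : ℝ, 0 ≤ l → φ l = q + a * l + ∫ x, (1 - Real.exp (-(l * x))) ∂ν)
    (hφpos : ∀ l : ℝ, 0 < l → 0 < φ l)
    (hφdiff : ∀ l : ℝ, 0 < l → DifferentiableAt ℝ φ l)
    (V : Measure ℝ) (hV0 : V (Set.Iio 0) = 0)
    (hV : ∀ l : ℝ, 0 < l →
      ∫⁻ x, ENNReal.ofReal (Real.exp (-(l * x))) ∂V = ENNReal.ofReal (1 / φ l))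
    (H : Measure ℝ) (hH0 : H (Set.Iic 0) = 0)
    (hH : ∀ l : ℝ, 0 < l →
      ∫⁻ x, ENNReal.ofReal (x * Real.exp (-(l * x))) ∂H
        = ENNReal.ofReal (deriv φ l / φ l)) :
    ∀ A : Set ℝ, MeasurableSet A → A ⊆ Set.Ioi 0 →
      (H.withDensity fun x => ENNReal.ofReal x) A
        = ENNReal.ofReal a * V A +
          ∫⁻ x, ∫⁻ y, A.indicator (fun _ => ENNReal.ofReal y) (x + y) ∂ν ∂V := by
  intro A hA _
  haveI : SigmaFinite ν := nu_sigmaFinite ν hν0 hνint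
  have haeH : ∀ᵐ x ∂H, (0:ℝ) < x := by
    rw [MeasureTheory.ae_iff]; simpa [not_lt, Set.Iic_def] using hH0
  have haeν : ∀ᵐ x ∂ν, (0:ℝ) < x := by
    rw [MeasureTheory.ae_iff]; simpa [not_lt, Set.Iic_def] using hν0
  have haeV : ∀ᵐ x ∂V, (0:ℝ) ≤ x := by
    rw [MeasureTheory.ae_iff]; simpa [not_le, Set.Iio_def] using hV0
  set ρ : Measure ℝ := ν.withDensity (fun y => ENNReal.ofReal y) with hρdef
  set P : Measure (ℝ × ℝ) := V.prod ρ with hPdef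
  have haddm : Measurable (fun p : ℝ × ℝ => p.1 + p.2) :=
    measurable_fst.add measurable_snd
  set μ₁ : Measure ℝ := H.withDensity (fun x => ENNReal.ofReal x) with hμ₁def
  set μ₂ : Measure ℝ := ENNReal.ofReal a • V +
    Measure.map (fun p : ℝ × ℝ => p.1 + p.2) P with hμ₂def
  have hexpm : ∀ l : ℝ, Measurable (fun x : ℝ => ENNReal.ofReal (Real.exp (-(l * x)))) :=
    fun l => ENNReal.measurable_ofReal.comp
      (Real.continuous_exp.comp (continuous_const.mul continuous_id').neg).measurable
  -- Laplace transform of μ₁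
  have hlap1 : ∀ l : ℝ, 0 < l →
      ∫⁻ x, ENNReal.ofReal (Real.exp (-(l * x))) ∂μ₁ = ENNReal.ofReal (deriv φ l / φ l) := by
    intro l hl
    rw [hμ₁def, lintegral_withDensity_eq_lintegral_mul H ENNReal.measurable_ofReal (hexpm l)]
    rw [← hH l hl]
    apply lintegral_congr_ae
    filter_upwards [haeH] with x hx
    simp only [Pi.mul_apply]
    rw [← ENNReal.ofReal_mul hx.le]
  -- Laplace transform of μ₂
  have hlap2 : ∀ l : ℝ, 0 < l →
      ∫⁻ x, ENNReal.ofReal (Real.exp (-(l * x))) ∂μ₂ = ENNReal.ofReal (deriv φ l / φ l) := by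
    intro l hl
    obtain ⟨hIint, hder⟩ := deriv_phi q a ν hν0 hνint φ hφ l hl
    set I : ℝ := ∫ x, x * Real.exp (-(l * x)) ∂ν with hIdef
    have hI0 : 0 ≤ I := integral_nonneg_of_ae (by
      filter_upwards [haeν] with x hx
      positivity)
    have hinnerρ : ∫⁻ y, ENNReal.ofReal (Real.exp (-(l * y))) ∂ρ = ENNReal.ofReal I := by
      rw [hρdef, lintegral_withDensity_eq_lintegral_mul ν ENNReal.measurable_ofReal (hexpm l)]
      rw [hIdef, MeasureTheory.ofReal_integral_eq_lintegral_ofReal hIint (by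
        filter_upwards [haeν] with x hx
        positivity)]
      apply lintegral_congr_ae
      filter_upwards [haeν] with y hy
      simp only [Pi.mul_apply]
      rw [← ENNReal.ofReal_mul hy.le]
    have hmap : ∫⁻ z, ENNReal.ofReal (Real.exp (-(l * z)))
        ∂(Measure.map (fun p : ℝ × ℝ => p.1 + p.2) P)
        = ENNReal.ofReal I * ENNReal.ofReal (1 / φ l) := by
      rw [lintegral_map (hexpm l) haddm]
      rw [MeasureTheory.lintegral_prod
        (fun z : ℝ × ℝ => ENNReal.ofReal (Real.exp (-(l * (z.1 + z.2)))))
        (((hexpm l).comp haddm).aemeasurable)]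
      have hin : ∀ x : ℝ, ∫⁻ y, ENNReal.ofReal (Real.exp (-(l * (x + y)))) ∂ρ
          = ENNReal.ofReal (Real.exp (-(l * x))) * ENNReal.ofReal I := by
        intro x
        rw [← hinnerρ, ← MeasureTheory.lintegral_const_mul _ (hexpm l)]
        apply lintegral_congr
        intro y
        rw [← ENNReal.ofReal_mul (Real.exp_pos _).le, ← Real.exp_add]
        ring_nf
      calc ∫⁻ x, ∫⁻ y, ENNReal.ofReal (Real.exp (-(l * (x + y)))) ∂ρ ∂V
          = ∫⁻ x, ENNReal.ofReal (Real.exp (-(l * x))) * ENNReal.ofReal I ∂V :=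
            lintegral_congr hin
        _ = (∫⁻ x, ENNReal.ofReal (Real.exp (-(l * x))) ∂V) * ENNReal.ofReal I :=
            MeasureTheory.lintegral_mul_const _ (hexpm l)
        _ = ENNReal.ofReal I * ENNReal.ofReal (1 / φ l) := by
            rw [hV l hl, mul_comm]
    rw [hμ₂def, MeasureTheory.lintegral_add_measure, MeasureTheory.lintegral_smul_measure,
      hmap, hV l hl, hder.deriv]
    have hrw2 : (a + I) / φ l = (a + I) * (1 / φ l) := by ring
    rw [hrw2, ENNReal.ofReal_mul (by linarith : (0:ℝ) ≤ a + I),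
      ENNReal.ofReal_add ha hI0, add_mul, smul_eq_mul]
  -- both vanish on `Iio 0`
  have hμ₁0 : μ₁ (Set.Iio 0) = 0 := by
    rw [hμ₁def, withDensity_apply _ measurableSet_Iio,
      Measure.restrict_eq_zero.2 (measure_mono_null Set.Iio_subset_Iic_self hH0)]
    simp
  have hρ0 : ρ (Set.Iic 0) = 0 := by
    rw [hρdef, withDensity_apply _ measurableSet_Iic, Measure.restrict_eq_zero.2 hν0]
    simp
  have hμ₂0 : μ₂ (Set.Iio 0) = 0 := by
    rw [hμ₂def, Measure.add_apply, Measure.smul_apply, smul_eq_mul, hV0, mul_zero,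
      zero_add, Measure.map_apply haddm measurableSet_Iio]
    have hSm : MeasurableSet ((fun p : ℝ × ℝ => p.1 + p.2) ⁻¹' Set.Iio 0) :=
      haddm measurableSet_Iio
    rw [hPdef, Measure.prod_apply hSm]
    have : ∀ᵐ x ∂V, ρ (Prod.mk x ⁻¹' ((fun p : ℝ × ℝ => p.1 + p.2) ⁻¹' Set.Iio 0)) = 0 := by
      filter_upwards [haeV] with x hx
      apply measure_mono_null _ hρ0
      intro y hy
      simp only [Set.mem_preimage, Set.mem_Iio] at hy
      simp only [Set.mem_Iic]
      linarith
    rw [lintegral_congr_ae this]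
    simp
  -- apply Laplace uniqueness
  have hμeq : μ₁ = μ₂ := by
    apply laplace_ext μ₁ μ₂ hμ₁0 hμ₂0
    · rw [hlap1 1 one_pos]; exact ENNReal.ofReal_ne_top
    · intro l hl; rw [hlap1 l hl, hlap2 l hl]
  -- compute μ₂ A
  have hfinal : μ₂ A = ENNReal.ofReal a * V A +
      ∫⁻ x, ∫⁻ y, A.indicator (fun _ => ENNReal.ofReal y) (x + y) ∂ν ∂V := by
    rw [hμ₂def, Measure.add_apply, Measure.smul_apply, smul_eq_mul,
      Measure.map_apply haddm hA]
    congr 1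
    have hSm : MeasurableSet ((fun p : ℝ × ℝ => p.1 + p.2) ⁻¹' A) := haddm hA
    rw [hPdef, Measure.prod_apply hSm]
    apply lintegral_congr
    intro x
    have hsx : MeasurableSet {y : ℝ | x + y ∈ A} :=
      (measurable_const.add measurable_id) hA
    have : Prod.mk x ⁻¹' ((fun p : ℝ × ℝ => p.1 + p.2) ⁻¹' A) = {y : ℝ | x + y ∈ A} := rfl
    rw [this, hρdef, withDensity_apply _ hsx, ← MeasureTheory.lintegral_indicator hsx]
    apply lintegral_congr
    intro y
    by_cases h : x + y ∈ A <;> simp [Set.indicator_apply, h]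
  rw [← hμ₁def] at *
  rw [hμeq, hfinal]
end
end

section
/- For each α > 0 let V_α be the unique measure on [0,∞) satisfying ∫_[0,∞) e^{−λx} V_α(dx) = 1/(α + φ(λ)) for all λ > 0 (the α-resolvent measure, assumed to exist). Then for every Borel set A ⊆ (0,∞): H(A) = ∫_0^∞ V_α(A) dα. -/
open MeasureTheory Real Set Filter Topology

noncomputable section

open Metric
open scoped ENNReal NNReal

lemma powIntegrable (P : Measure ℝ) [IsFiniteMeasure P] (hae : ∀ᵐ t ∂P, t ∈ Icc (0:ℝ) 1)
    (n : ℕ) : Integrable (fun t : ℝ => t ^ n) P := by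
  refine Integrable.mono' (integrable_const 1) ((measurable_id.pow_const n).aestronglyMeasurable) ?_
  filter_upwards [hae] with t ht
  rw [Real.norm_eq_abs, abs_pow]
  exact pow_le_one₀ (abs_nonneg t) (abs_le.2 ⟨by linarith [ht.1], ht.2⟩)

lemma polIntegrable (P : Measure ℝ) [IsFiniteMeasure P] (hae : ∀ᵐ t ∂P, t ∈ Icc (0:ℝ) 1)
    (p : Polynomial ℝ) : Integrable (fun t : ℝ => p.eval t) P := by
  have hev : (fun t : ℝ => p.eval t)
      = fun t => ∑ i ∈ Finset.range (p.natDegree + 1), p.coeff i * t ^ i := by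
    funext t; exact p.eval_eq_sum_range t
  rw [hev]
  exact integrable_finset_sum _ (fun i _ => (powIntegrable P hae i).const_mul _)

/-- Finite measures concentrated on `[0,1]` with equal moments are equal. -/
lemma momentDet (P Q : Measure ℝ) [IsFiniteMeasure P] [IsFiniteMeasure Q]
    (hP : P (Icc (0:ℝ) 1)ᶜ = 0) (hQ : Q (Icc (0:ℝ) 1)ᶜ = 0)
    (h : ∀ n : ℕ, ∫ t, t ^ n ∂P = ∫ t, t ^ n ∂Q) : P = Q := by
  have haeP : ∀ᵐ t ∂P, t ∈ Icc (0:ℝ) 1 := by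
    rw [ae_iff]; exact hP
  have haeQ : ∀ᵐ t ∂Q, t ∈ Icc (0:ℝ) 1 := by
    rw [ae_iff]; exact hQ
  -- polynomial integrals agree
  have hpoly : ∀ p : Polynomial ℝ, ∫ t, p.eval t ∂P = ∫ t, p.eval t ∂Q := by
    intro p
    have hev : ∀ t : ℝ, p.eval t = ∑ i ∈ Finset.range (p.natDegree + 1), p.coeff i * t ^ i :=
      fun t => p.eval_eq_sum_range t
    simp only [hev]
    rw [integral_finset_sum _ (fun i _ => (powIntegrable P haeP i).const_mul _),
      integral_finset_sum _ (fun i _ => (powIntegrable Q haeQ i).const_mul _)]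
    refine Finset.sum_congr rfl fun i _ => ?_
    rw [integral_const_mul, integral_const_mul, h i]
  -- bounded continuous real functions
  have hbc : ∀ g : BoundedContinuousFunction ℝ ℝ, ∫ t, g t ∂P = ∫ t, g t ∂Q := by
    intro g
    have key : ∀ ε : ℝ, 0 < ε →
        |∫ t, g t ∂P - ∫ t, g t ∂Q| ≤ ε * ((P univ).toReal + (Q univ).toReal) := by
      intro ε hε
      set G : C(Icc (0:ℝ) 1, ℝ) := (g.toContinuousMap).restrict (Icc (0:ℝ) 1) with hG
      have hmem : G ∈ closure ((polynomialFunctions (Icc (0:ℝ) 1)) : Set C(Icc (0:ℝ) 1, ℝ)) := by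
        have h1 : G ∈ (polynomialFunctions (Icc (0:ℝ) 1)).topologicalClosure := by
          rw [polynomialFunctions_closure_eq_top 0 1]; exact Algebra.mem_top
        exact h1
      rw [Metric.mem_closure_iff] at hmem
      obtain ⟨b, hb, hdist⟩ := hmem ε hε
      rw [show ((polynomialFunctions (Icc (0:ℝ) 1)) : Set C(Icc (0:ℝ) 1, ℝ))
        = Set.range (Polynomial.toContinuousMapOnAlgHom (Icc (0:ℝ) 1)) from
          polynomialFunctions_coe _] at hb
      obtain ⟨p, rfl⟩ := hb
      have hclose : ∀ t ∈ Icc (0:ℝ) 1, |g t - p.eval t| ≤ ε := by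
        intro t ht
        have := ContinuousMap.dist_apply_le_dist (f := G)
          (g := Polynomial.toContinuousMapOnAlgHom (Icc (0:ℝ) 1) p) ⟨t, ht⟩
        have h2 : dist (g t) (p.eval t) ≤ ε := le_of_lt (lt_of_le_of_lt this hdist)
        simpa [Real.dist_eq] using h2
      have hPbound : |∫ t, g t ∂P - ∫ t, p.eval t ∂P| ≤ ε * (P univ).toReal := by
        rw [← integral_sub (g.integrable P) (polIntegrable P haeP p)]
        have := norm_integral_le_of_norm_le_const (μ := P)
          (f := fun t => g t - p.eval t) (C := ε) ?_
        · simpa [Real.norm_eq_abs, measureReal_def] using this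
        · filter_upwards [haeP] with t ht
          simpa [Real.norm_eq_abs] using hclose t ht
      have hQbound : |∫ t, g t ∂Q - ∫ t, p.eval t ∂Q| ≤ ε * (Q univ).toReal := by
        rw [← integral_sub (g.integrable Q) (polIntegrable Q haeQ p)]
        have := norm_integral_le_of_norm_le_const (μ := Q)
          (f := fun t => g t - p.eval t) (C := ε) ?_
        · simpa [Real.norm_eq_abs, measureReal_def] using this
        · filter_upwards [haeQ] with t ht
          simpa [Real.norm_eq_abs] using hclose t ht
      have hpq := hpoly p
      have hsplit : ∫ t, g t ∂P - ∫ t, g t ∂Q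
          = (∫ t, g t ∂P - ∫ t, p.eval t ∂P) + ((∫ t, p.eval t ∂Q) - ∫ t, g t ∂Q) := by
        rw [hpq]; ring
      calc |∫ t, g t ∂P - ∫ t, g t ∂Q|
          ≤ |∫ t, g t ∂P - ∫ t, p.eval t ∂P| + |(∫ t, p.eval t ∂Q) - ∫ t, g t ∂Q| := by
            rw [hsplit]; exact abs_add_le _ _
        _ = |∫ t, g t ∂P - ∫ t, p.eval t ∂P| + |∫ t, g t ∂Q - ∫ t, p.eval t ∂Q| := by
            rw [abs_sub_comm (∫ t, p.eval t ∂Q)]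
        _ ≤ ε * (P univ).toReal + ε * (Q univ).toReal := add_le_add hPbound hQbound
        _ = ε * ((P univ).toReal + (Q univ).toReal) := by ring
    -- conclude the difference is 0
    set D := ∫ t, g t ∂P - ∫ t, g t ∂Q with hD
    set C := (P univ).toReal + (Q univ).toReal with hC
    have hC0 : 0 ≤ C := by positivity
    by_contra hne
    have hD0 : 0 < |D| := abs_pos.2 (sub_ne_zero.2 hne)
    have hk := key (|D| / (2 * (C + 1))) (by positivity)
    have h2 : |D| / (2 * (C + 1)) * C < |D| := by
      rw [div_mul_eq_mul_div, div_lt_iff₀ (by positivity)]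
      nlinarith
    linarith
  -- conclude via lintegrals of nonneg bounded continuous functions
  refine ext_of_forall_lintegral_eq_of_IsFiniteMeasure ?_
  intro f
  obtain ⟨Cf, hCf⟩ := f.bounded
  set g0 : BoundedContinuousFunction ℝ ℝ := BoundedContinuousFunction.mkOfBound
    ⟨fun x => ((f x : ℝ)), NNReal.continuous_coe.comp f.continuous⟩ Cf
    (fun x y => by exact hCf x y) with hg0
  have hPi : Integrable (fun x => ((f x : ℝ))) P := g0.integrable P
  have hQi : Integrable (fun x => ((f x : ℝ))) Q := g0.integrable Q
  rw [lintegral_coe_eq_integral f hPi, lintegral_coe_eq_integral f hQi]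
  congr 1
  exact hbc g0

/-- Uniqueness of Laplace transforms for measures on `[0,∞)`. -/
lemma laplaceUnique (μ ρ : Measure ℝ) (hμ0 : μ (Iio 0) = 0) (hρ0 : ρ (Iio 0) = 0)
    (hfin : ∫⁻ x, ENNReal.ofReal (exp (-x)) ∂μ < ⊤)
    (h : ∀ l : ℝ, 0 < l → ∫⁻ x, ENNReal.ofReal (exp (-(l * x))) ∂μ
      = ∫⁻ x, ENNReal.ofReal (exp (-(l * x))) ∂ρ) : μ = ρ := by
  set w : ℝ → ℝ≥0∞ := fun x => ENNReal.ofReal (exp (-x)) with hw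
  have hwm : Measurable w := by
    exact ENNReal.measurable_ofReal.comp ((continuous_exp.comp continuous_neg).measurable)
  set μ' := μ.withDensity w with hμ'
  set ρ' := ρ.withDensity w with hρ'
  -- the exponentially weighted Laplace transforms agree for nonneg integer powers
  have key : ∀ n : ℕ, ∫⁻ x, ENNReal.ofReal ((exp (-x)) ^ n) ∂μ'
      = ∫⁻ x, ENNReal.ofReal ((exp (-x)) ^ n) ∂ρ' := by
    intro n
    have hgm : Measurable fun x : ℝ => ENNReal.ofReal ((exp (-x)) ^ n) := by
      exact ENNReal.measurable_ofReal.comp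
        (((continuous_exp.comp continuous_neg).pow n).measurable)
    rw [hμ', hρ', lintegral_withDensity_eq_lintegral_mul _ hwm hgm,
      lintegral_withDensity_eq_lintegral_mul _ hwm hgm]
    have hptw : (w * fun x => ENNReal.ofReal ((exp (-x)) ^ n))
        = fun x => ENNReal.ofReal (exp (-(((n : ℝ) + 1) * x))) := by
      funext x
      simp only [hw, Pi.mul_apply]
      rw [← ENNReal.ofReal_mul (exp_nonneg _)]
      congr 1
      rw [← Real.exp_nat_mul, ← Real.exp_add]
      ring_nf
    rw [hptw]
    exact h ((n : ℝ) + 1) (by positivity)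
  -- finiteness
  have hμfin : IsFiniteMeasure μ' := by
    constructor
    rw [hμ', withDensity_apply _ MeasurableSet.univ, Measure.restrict_univ]
    exact hfin
  have hρfin : IsFiniteMeasure ρ' := by
    constructor
    rw [hρ', withDensity_apply _ MeasurableSet.univ, Measure.restrict_univ]
    have h1 := h 1 one_pos
    simp only [one_mul] at h1
    rw [hw]
    calc ∫⁻ x, ENNReal.ofReal (exp (-x)) ∂ρ
        = ∫⁻ x, ENNReal.ofReal (exp (-(1 * x))) ∂ρ := by simp only [one_mul]
      _ = ∫⁻ x, ENNReal.ofReal (exp (-(1 * x))) ∂μ := (h 1 one_pos).symm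
      _ = ∫⁻ x, ENNReal.ofReal (exp (-x)) ∂μ := by simp only [one_mul]
      _ < ⊤ := hfin
  -- null below zero
  have hμ'0 : μ' (Iio 0) = 0 := by
    rw [hμ', withDensity_apply _ measurableSet_Iio]
    rw [Measure.restrict_eq_zero.2 hμ0]
    simp
  have hρ'0 : ρ' (Iio 0) = 0 := by
    rw [hρ', withDensity_apply _ measurableSet_Iio]
    rw [Measure.restrict_eq_zero.2 hρ0]
    simp
  -- push forward by x ↦ exp (-x)
  set f : ℝ → ℝ := fun x => exp (-x) with hf
  have hfc : Continuous f := continuous_exp.comp continuous_neg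
  have hfinj : Function.Injective f := fun x y hxy => by
    have := Real.exp_injective hxy; linarith [neg_injective this]
  have hfemb : MeasurableEmbedding f := hfc.measurableEmbedding hfinj
  set P := μ'.map f with hP
  set Q := ρ'.map f with hQ
  haveI : IsFiniteMeasure P := by rw [hP]; infer_instance
  haveI : IsFiniteMeasure Q := by rw [hQ]; infer_instance
  -- concentration on [0,1]
  have hconc : ∀ (m : Measure ℝ), m (Iio 0) = 0 → (m.map f) (Icc (0:ℝ) 1)ᶜ = 0 := by
    intro m hm
    rw [Measure.map_apply hfc.measurable (measurableSet_Icc.compl)]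
    refine measure_mono_null ?_ hm
    intro x hx
    simp only [mem_preimage, mem_compl_iff, mem_Icc, not_and, not_le] at hx
    by_contra hx0
    simp only [mem_Iio, not_lt] at hx0
    have h1 : f x ≤ 1 := by
      rw [hf]; simp only
      calc exp (-x) ≤ exp 0 := exp_le_exp.2 (by linarith)
        _ = 1 := exp_zero
    exact absurd (hx (exp_nonneg _)) (not_lt.2 h1)
  -- moments of P and Q agree
  have hpowm : ∀ n : ℕ, Measurable (fun t : ℝ => ENNReal.ofReal (t ^ n)) := fun n =>
    ENNReal.measurable_ofReal.comp (measurable_id.pow_const n)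
  have hmom : ∀ n : ℕ, ∫ t, t ^ n ∂P = ∫ t, t ^ n ∂Q := by
    intro n
    have hPmom : ∫⁻ t, ENNReal.ofReal (t ^ n) ∂P = ∫⁻ t, ENNReal.ofReal (t ^ n) ∂Q := by
      rw [hP, hQ, lintegral_map (hpowm n) hfc.measurable, lintegral_map (hpowm n) hfc.measurable]
      exact key n
    have haeP : ∀ᵐ t ∂P, t ∈ Icc (0:ℝ) 1 := by rw [ae_iff]; exact hconc μ' hμ'0
    have haeQ : ∀ᵐ t ∂Q, t ∈ Icc (0:ℝ) 1 := by rw [ae_iff]; exact hconc ρ' hρ'0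
    have hnnP : 0 ≤ᵐ[P] fun t : ℝ => t ^ n := by
      filter_upwards [haeP] with t ht
      exact pow_nonneg ht.1 n
    have hnnQ : 0 ≤ᵐ[Q] fun t : ℝ => t ^ n := by
      filter_upwards [haeQ] with t ht
      exact pow_nonneg ht.1 n
    have hsm : AEStronglyMeasurable (fun t : ℝ => t ^ n) P ∧
        AEStronglyMeasurable (fun t : ℝ => t ^ n) Q :=
      ⟨(measurable_id.pow_const n).aestronglyMeasurable,
        (measurable_id.pow_const n).aestronglyMeasurable⟩
    rw [integral_eq_lintegral_of_nonneg_ae hnnP hsm.1,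
      integral_eq_lintegral_of_nonneg_ae hnnQ hsm.2, hPmom]
  have hPQ : P = Q := momentDet P Q (hconc μ' hμ'0) (hconc ρ' hρ'0) hmom
  -- pull back
  have h'eq : μ' = ρ' := by
    ext s hs
    have h1 : P (f '' s) = Q (f '' s) := by rw [hPQ]
    rw [hP, hQ, Measure.map_apply hfc.measurable (hfemb.measurableSet_image.2 hs),
      Measure.map_apply hfc.measurable (hfemb.measurableSet_image.2 hs),
      Function.Injective.preimage_image hfinj] at h1
    exact h1
  -- remove the density
  have hwin : ∀ x, w x * (w x)⁻¹ = 1 := by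
    intro x
    refine ENNReal.mul_inv_cancel ?_ ?_
    · simp [hw, ENNReal.ofReal_eq_zero, not_le, exp_pos]
    · exact ENNReal.ofReal_ne_top
  have hrec : ∀ (m : Measure ℝ), (m.withDensity w).withDensity (fun x => (w x)⁻¹) = m := by
    intro m
    rw [← withDensity_mul m hwm (g := fun x => (w x)⁻¹) (hwm.inv)]
    have : (w * fun x => (w x)⁻¹) = 1 := by funext x; exact hwin x
    rw [this, withDensity_one]
  calc μ = (μ.withDensity w).withDensity (fun x => (w x)⁻¹) := (hrec μ).symm
    _ = (ρ.withDensity w).withDensity (fun x => (w x)⁻¹) := by rw [← hμ', ← hρ', h'eq]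
    _ = ρ := hrec ρ

/-- A measure on `[0,∞)` whose Laplace transform is bounded by `c` has mass at most `c`. -/
lemma massBound (μ : Measure ℝ) (h0 : μ (Iio 0) = 0) (c : ℝ)
    (hL : ∀ l : ℝ, 0 < l → ∫⁻ x, ENNReal.ofReal (exp (-(l * x))) ∂μ ≤ ENNReal.ofReal c) :
    μ univ ≤ ENNReal.ofReal c := by
  have huniv : μ univ = μ (Ici 0) := by
    have h1 : μ univ ≤ μ (Iio 0) + μ (Ici 0) := by
      rw [show (univ : Set ℝ) = Iio 0 ∪ Ici 0 by simp [Iio_union_Ici]]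
      exact measure_union_le _ _
    rw [h0, zero_add] at h1
    exact le_antisymm h1 (measure_mono (subset_univ _))
  set fn : ℕ → ℝ → ℝ≥0∞ := fun n x => ENNReal.ofReal (exp (-(1 / ((n : ℝ) + 1) * x))) with hfn
  have hfnm : ∀ n, Measurable (fn n) := by
    intro n
    exact ENNReal.measurable_ofReal.comp
      (continuous_exp.measurable.comp (measurable_id.const_mul _).neg)
  have hmono : ∀ x : ℝ, 0 ≤ x → Monotone fun n => fn n x := by
    intro x hx n m hnm
    refine ENNReal.ofReal_le_ofReal (exp_le_exp.2 ?_)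
    have h1 : (1 : ℝ) / ((m : ℝ) + 1) ≤ 1 / ((n : ℝ) + 1) := by
      apply one_div_le_one_div_of_le (by positivity)
      exact_mod_cast Nat.add_le_add_right hnm 1
    nlinarith
  have hsup : ∀ x : ℝ, 0 ≤ x → (⨆ n, fn n x) = 1 := by
    intro x hx
    have htend : Tendsto (fun n : ℕ => fn n x) atTop (𝓝 1) := by
      have h1 : Tendsto (fun n : ℕ => 1 / ((n : ℝ) + 1) * x) atTop (𝓝 0) := by
        simpa using tendsto_one_div_add_atTop_nhds_zero_nat.mul_const x
      have h2 : Tendsto (fun n : ℕ => exp (-(1 / ((n : ℝ) + 1) * x))) atTop (𝓝 1) := by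
        have h1n : Tendsto (fun n : ℕ => -(1 / ((n : ℝ) + 1) * x)) atTop (𝓝 0) := by
          simpa using h1.neg
        have := (continuous_exp.tendsto 0).comp h1n
        simpa [Function.comp_def] using this
      have := (ENNReal.continuous_ofReal.tendsto 1).comp h2
      simpa [hfn, Function.comp_def] using this
    exact tendsto_nhds_unique (tendsto_atTop_iSup fun n m hnm => hmono x hx hnm) htend
  calc μ univ = μ (Ici 0) := huniv
    _ = ∫⁻ x in Ici 0, 1 ∂μ := by rw [setLIntegral_one]
    _ = ∫⁻ x in Ici 0, ⨆ n, fn n x ∂μ := by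
        refine setLIntegral_congr_fun measurableSet_Ici (fun x hx => ?_)
        exact (hsup x hx).symm
    _ = ⨆ n, ∫⁻ x in Ici 0, fn n x ∂μ := by
        refine lintegral_iSup' (fun n => (hfnm n).aemeasurable) ?_
        filter_upwards [ae_restrict_mem measurableSet_Ici] with x hx
        exact hmono x hx
    _ ≤ ⨆ n, ∫⁻ x, fn n x ∂μ := iSup_mono fun n => setLIntegral_le_lintegral _ _
    _ ≤ ENNReal.ofReal c := iSup_le fun n => hL (1 / ((n : ℝ) + 1)) (by positivity)

section Resolvent

variable (φ : ℝ → ℝ) (hφpos : ∀ l : ℝ, 0 < l → 0 < φ l)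
  (Vα : ℝ → Measure ℝ)
  (hVα0 : ∀ α : ℝ, 0 < α → Vα α (Set.Iio 0) = 0)
  (hVα : ∀ α : ℝ, 0 < α → ∀ l : ℝ, 0 < l →
    ∫⁻ x, ENNReal.ofReal (Real.exp (-(l * x))) ∂(Vα α)
      = ENNReal.ofReal (1 / (α + φ l)))

include hφpos hVα0 hVα

lemma resolventFin {α : ℝ} (hα : 0 < α) : IsFiniteMeasure (Vα α) := by
  constructor
  refine lt_of_le_of_lt (massBound (Vα α) (hVα0 α hα) (1 / α) fun l hl => ?_)
    ENNReal.ofReal_lt_top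
  rw [hVα α hα l hl]
  refine ENNReal.ofReal_le_ofReal ?_
  apply one_div_le_one_div_of_le hα
  linarith [hφpos l hl]

lemma resolventMono {α β : ℝ} (hα : 0 < α) (hαβ : α ≤ β) (s : Set ℝ) :
    Vα β s ≤ Vα α s := by
  rcases eq_or_lt_of_le hαβ with rfl | hlt
  · exact le_rfl
  have hβ : 0 < β := lt_trans hα hlt
  haveI hFα : IsFiniteMeasure (Vα α) := resolventFin φ hφpos Vα hVα0 hVα hα
  haveI hFβ : IsFiniteMeasure (Vα β) := resolventFin φ hφpos Vα hVα0 hVα hβ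
  set D : Measure ℝ := (ENNReal.ofReal (β - α)) •
    ((Vα α).prod (Vα β)).map (fun p : ℝ × ℝ => p.1 + p.2) with hD
  have haddm : Measurable (fun p : ℝ × ℝ => p.1 + p.2) := measurable_fst.add measurable_snd
  have hkey : Vα α = Vα β + D := by
    refine laplaceUnique _ _ (hVα0 α hα) ?_ ?_ ?_
    · rw [Measure.add_apply, hVα0 β hβ, zero_add, hD, Measure.smul_apply, smul_eq_mul]
      have hmap : ((Vα α).prod (Vα β)).map (fun p : ℝ × ℝ => p.1 + p.2) (Iio 0) = 0 := by
        rw [Measure.map_apply haddm measurableSet_Iio]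
        have hsub : (fun p : ℝ × ℝ => p.1 + p.2) ⁻¹' (Iio 0)
            ⊆ (Iio 0 ×ˢ univ) ∪ (univ ×ˢ Iio 0) := by
          intro p hp
          simp only [mem_preimage, mem_Iio] at hp
          by_contra hc
          simp only [mem_union, mem_prod, mem_Iio, mem_univ, and_true, true_and, not_or,
            not_lt] at hc
          linarith [hc.1, hc.2]
        refine measure_mono_null hsub ?_
        rw [measure_union_null_iff]
        constructor
        · rw [Measure.prod_prod, hVα0 α hα, zero_mul]
        · rw [Measure.prod_prod, hVα0 β hβ, mul_zero]
      rw [hmap, mul_zero]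
    · have h1 := hVα α hα 1 one_pos
      simp only [one_mul] at h1
      rw [show (fun x : ℝ => ENNReal.ofReal (exp (-x)))
        = fun x : ℝ => ENNReal.ofReal (exp (-(1 * x))) by funext x; rw [one_mul]]
      rw [hVα α hα 1 one_pos]
      exact ENNReal.ofReal_lt_top
    · intro l hl
      have hc := hφpos l hl
      set c := φ l with hcdef
      have hgm : Measurable fun x : ℝ => ENNReal.ofReal (exp (-(l * x))) :=
        ENNReal.measurable_ofReal.comp
          (continuous_exp.measurable.comp (measurable_id.const_mul l).neg)
      have hDlt : ∫⁻ x, ENNReal.ofReal (exp (-(l * x))) ∂D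
          = ENNReal.ofReal (β - α) * (ENNReal.ofReal (1 / (α + c)) * ENNReal.ofReal (1 / (β + c))) := by
        rw [hD, lintegral_smul_measure, lintegral_map hgm haddm]
        have hptw : (fun p : ℝ × ℝ => ENNReal.ofReal (exp (-(l * (p.1 + p.2)))))
            = fun p : ℝ × ℝ => ENNReal.ofReal (exp (-(l * p.1))) * ENNReal.ofReal (exp (-(l * p.2))) := by
          funext p
          rw [← ENNReal.ofReal_mul (exp_nonneg _), ← Real.exp_add]
          ring_nf
        rw [hptw, lintegral_prod_mul (hgm.aemeasurable) (hgm.aemeasurable),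
          hVα α hα l hl, hVα β hβ l hl, smul_eq_mul]
      rw [lintegral_add_measure, hVα α hα l hl, hVα β hβ l hl, hDlt]
      have hαc : 0 < α + c := by linarith
      have hβc : 0 < β + c := by linarith
      have h1 : (0:ℝ) ≤ 1 / (α + c) := le_of_lt (one_div_pos.2 hαc)
      have h2 : (0:ℝ) ≤ 1 / (β + c) := le_of_lt (one_div_pos.2 hβc)
      have h3 : (0:ℝ) ≤ β - α := by linarith
      rw [← ENNReal.ofReal_mul h1, ← ENNReal.ofReal_mul h3,
        ← ENNReal.ofReal_add h2 (mul_nonneg h3 (mul_nonneg h1 h2))]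
      congr 1
      have h4 : α + c ≠ 0 := ne_of_gt hαc
      have h5 : β + c ≠ 0 := ne_of_gt hβc
      rw [← hcdef]
      field_simp
      ring
  calc Vα β s ≤ Vα β s + D s := le_add_right le_rfl
    _ = Vα α s := by rw [hkey, Measure.add_apply]

end Resolvent

/-- Weighted Laplace transform of a resolvent measure, by differentiating under the integral. -/
lemma resolventDerivLT (φ : ℝ → ℝ) (hφdiff : ∀ l : ℝ, 0 < l → DifferentiableAt ℝ φ l)
    (V : Measure ℝ) (α : ℝ) (hα : 0 < α) (hαφ : ∀ l : ℝ, 0 < l → 0 < α + φ l)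
    (hV0 : V (Iio 0) = 0)
    (hLT : ∀ l : ℝ, 0 < l → ∫⁻ x, ENNReal.ofReal (exp (-(l * x))) ∂V
      = ENNReal.ofReal (1 / (α + φ l))) {l : ℝ} (hl : 0 < l) :
    ∫⁻ x, ENNReal.ofReal (x * exp (-(l * x))) ∂V
      = ENNReal.ofReal (deriv φ l / (α + φ l) ^ 2) ∧ 0 ≤ deriv φ l := by
  have haeV : ∀ᵐ x ∂V, 0 ≤ x := by
    rw [ae_iff]
    have : {x : ℝ | ¬ 0 ≤ x} = Iio 0 := by ext x; simp
    rw [this]; exact hV0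
  have hexpm : ∀ δ : ℝ, Measurable fun x : ℝ => exp (-(δ * x)) := fun δ =>
    continuous_exp.measurable.comp (measurable_id.const_mul δ).neg
  have expInt : ∀ δ : ℝ, 0 < δ → Integrable (fun x => exp (-(δ * x))) V := by
    intro δ hδ
    refine ⟨(hexpm δ).aestronglyMeasurable, ?_⟩
    rw [hasFiniteIntegral_iff_ofReal (ae_of_all _ fun x => exp_nonneg _)]
    rw [hLT δ hδ]
    exact ENNReal.ofReal_lt_top
  have xexpInt : ∀ δ : ℝ, 0 < δ → Integrable (fun x => x * exp (-(δ * x))) V := by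
    intro δ hδ
    refine Integrable.mono' (((expInt (δ/2) (by linarith)).const_mul (2/δ))) ?_ ?_
    · exact (measurable_id.mul (hexpm δ)).aestronglyMeasurable
    · filter_upwards [haeV] with x hx
      rw [Real.norm_eq_abs, abs_of_nonneg (mul_nonneg hx (exp_nonneg _))]
      have h1 : x ≤ 2 / δ * exp (δ / 2 * x) := by
        have h2 : δ / 2 * x ≤ exp (δ / 2 * x) := by
          linarith [Real.add_one_le_exp (δ / 2 * x), exp_pos (δ/2*x)]
        calc x = 2 / δ * (δ / 2 * x) := by field_simp
          _ ≤ 2 / δ * exp (δ / 2 * x) := by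
              apply mul_le_mul_of_nonneg_left h2 (by positivity)
      calc x * exp (-(δ * x)) ≤ 2 / δ * exp (δ / 2 * x) * exp (-(δ * x)) := by
            apply mul_le_mul_of_nonneg_right h1 (exp_nonneg _)
        _ = 2 / δ * exp (-(δ / 2 * x)) := by
            rw [mul_assoc, ← Real.exp_add]; ring_nf
  -- derivative under the integral sign
  have hdom := hasDerivAt_integral_of_dominated_loc_of_deriv_le (μ := V)
    (F := fun u x => exp (-(u * x))) (F' := fun u x => -(x * exp (-(u * x))))
    (x₀ := l) (s := ball l (l / 2)) (bound := fun x => x * exp (-(l / 2 * x)))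
    (ball_mem_nhds l (by linarith))
    (Eventually.of_forall fun u => (hexpm u).aestronglyMeasurable)
    (expInt l hl)
    ((measurable_id.mul (hexpm l)).neg.aestronglyMeasurable)
    ?_ (xexpInt (l/2) (by linarith)) ?_
  · obtain ⟨hint, hderiv⟩ := hdom
    -- derivative of the explicit formula
    have hG : HasDerivAt (fun u => (α + φ u)⁻¹) (-(deriv φ l) / (α + φ l) ^ 2) l :=
      HasDerivAt.inv ((hφdiff l hl).hasDerivAt.const_add α) (ne_of_gt (hαφ l hl))
    have hFeqG : (fun u => ∫ x, exp (-(u * x)) ∂V) =ᶠ[𝓝 l] fun u => (α + φ u)⁻¹ := by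
      filter_upwards [Ioi_mem_nhds hl] with u hu
      have h1 : ∫ x, exp (-(u * x)) ∂V = (∫⁻ x, ENNReal.ofReal (exp (-(u * x))) ∂V).toReal :=
        integral_eq_lintegral_of_nonneg_ae (ae_of_all _ fun x => exp_nonneg _)
          (hexpm u).aestronglyMeasurable
      rw [h1, hLT u hu, ENNReal.toReal_ofReal (le_of_lt (one_div_pos.2 (hαφ u hu)))]
      rw [one_div]
    have hG' : HasDerivAt (fun u => (α + φ u)⁻¹) (∫ x, -(x * exp (-(l * x))) ∂V) l :=
      hderiv.congr_of_eventuallyEq hFeqG.symm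
    have huniq : ∫ x, -(x * exp (-(l * x))) ∂V = -(deriv φ l) / (α + φ l) ^ 2 :=
      hG'.unique hG
    rw [integral_neg] at huniq
    have hI : ∫ x, x * exp (-(l * x)) ∂V = deriv φ l / (α + φ l) ^ 2 := by
      rw [neg_div] at huniq
      exact neg_injective huniq
    have hInn : 0 ≤ ∫ x, x * exp (-(l * x)) ∂V := by
      refine integral_nonneg_of_ae ?_
      filter_upwards [haeV] with x hx
      exact mul_nonneg hx (exp_nonneg _)
    have hd : 0 ≤ deriv φ l := by
      have h2 : deriv φ l = (∫ x, x * exp (-(l * x)) ∂V) * (α + φ l) ^ 2 := by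
        rw [hI, div_mul_cancel₀ _ (pow_ne_zero 2 (ne_of_gt (hαφ l hl)))]
      rw [h2]
      exact mul_nonneg hInn (by positivity)
    refine ⟨?_, hd⟩
    rw [← ofReal_integral_eq_lintegral_ofReal (xexpInt l hl)
      (by filter_upwards [haeV] with x hx; exact mul_nonneg hx (exp_nonneg _)), hI]
  · -- bound
    filter_upwards [haeV] with x hx u hu
    rw [Real.norm_eq_abs, abs_neg, abs_of_nonneg (mul_nonneg hx (exp_nonneg _))]
    have h1 : l / 2 ≤ u := by
      rw [mem_ball, Real.dist_eq, abs_lt] at hu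
      linarith [hu.1]
    apply mul_le_mul_of_nonneg_left _ hx
    exact exp_le_exp.2 (by nlinarith)
  · -- differentiability
    filter_upwards with x u _
    have h1 : HasDerivAt (fun u : ℝ => -(u * x)) (-x) u := by
      have := ((hasDerivAt_id u).mul_const x).neg
      exact this.congr_deriv (by ring)
    have h2 := h1.exp
    exact h2.congr_deriv (by ring)

lemma alphaIntegral (p c : ℝ) (hp : 0 ≤ p) (hc : 0 < c) :
    ∫⁻ α in Ioi (0:ℝ), ENNReal.ofReal (p / (α + c) ^ 2) = ENNReal.ofReal (p / c) := by
  set g : ℝ → ℝ := fun α => -(p * (α + c)⁻¹) with hg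
  have hderiv : ∀ α ∈ Ici (0:ℝ), HasDerivAt g (p / (α + c) ^ 2) α := by
    intro α hα
    have hne : α + c ≠ 0 := by simp only [mem_Ici] at hα; positivity
    have h1 : HasDerivAt (fun α : ℝ => α + c) 1 α := (hasDerivAt_id α).add_const c
    have h2 := (h1.inv hne).const_mul p
    have h3 := h2.neg
    exact h3.congr_deriv (by field_simp)
  have htend : Tendsto g atTop (𝓝 0) := by
    have h1 : Tendsto (fun α : ℝ => α + c) atTop atTop := tendsto_atTop_add_const_right _ c tendsto_id
    have h2 := (h1.inv_tendsto_atTop).const_mul p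
    have h3 := h2.neg
    simpa [hg] using h3
  have hnn : ∀ α ∈ Ioi (0:ℝ), 0 ≤ p / (α + c) ^ 2 := fun α _ => by positivity
  have hval : ∫ α in Ioi (0:ℝ), p / (α + c) ^ 2 = p / c := by
    rw [integral_Ioi_of_hasDerivAt_of_nonneg' hderiv hnn htend]
    simp [hg, zero_add]
    rw [div_eq_mul_inv]
  have hInt : IntegrableOn (fun α => p / (α + c) ^ 2) (Ioi (0:ℝ)) :=
    integrableOn_Ioi_deriv_of_nonneg' hderiv hnn htend
  rw [← ofReal_integral_eq_lintegral_ofReal hInt (ae_of_all _ fun α => by positivity), hval]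

/-- with `V_α` the `α`-resolvent measures
(`∫ e^{-λx} V_α(dx) = 1/(α+φ(λ))`), for every Borel `A ⊆ (0,∞)` one has
`H(A) = ∫_0^∞ V_α(A) dα`. -/
theorem stmt16
    (q a : ℝ) (hq : 0 ≤ q) (ha : 0 ≤ a)
    (ν : Measure ℝ) (hν0 : ν (Set.Iic 0) = 0)
    (hνint : ∫⁻ x, ENNReal.ofReal (min x 1) ∂ν < ⊤)
    (hnz : ¬(q = 0 ∧ a = 0 ∧ ν = 0))
    (φ : ℝ → ℝ)
    (hφ : ∀ l : ℝ, 0 ≤ l → φ l = q + a * l + ∫ x, (1 - Real.exp (-(l * x))) ∂ν)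
    (hφpos : ∀ l : ℝ, 0 < l → 0 < φ l)
    (hφdiff : ∀ l : ℝ, 0 < l → DifferentiableAt ℝ φ l)
    (H : Measure ℝ) (hH0 : H (Set.Iic 0) = 0)
    (hH : ∀ l : ℝ, 0 < l →
      ∫⁻ x, ENNReal.ofReal (x * Real.exp (-(l * x))) ∂H
        = ENNReal.ofReal (deriv φ l / φ l))
    (Vα : ℝ → Measure ℝ)
    (hVα0 : ∀ α : ℝ, 0 < α → Vα α (Set.Iio 0) = 0)
    (hVα : ∀ α : ℝ, 0 < α → ∀ l : ℝ, 0 < l →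
      ∫⁻ x, ENNReal.ofReal (Real.exp (-(l * x))) ∂(Vα α)
        = ENNReal.ofReal (1 / (α + φ l))) :
    ∀ A : Set ℝ, MeasurableSet A → A ⊆ Set.Ioi 0 →
      H A = ∫⁻ α in Set.Ioi (0 : ℝ), Vα α A := by
  intro A hA hA0
  have hαφ : ∀ α : ℝ, 0 < α → ∀ l : ℝ, 0 < l → 0 < α + φ l := fun α hα l hl => by
    linarith [hφpos l hl]
  -- the kernel
  set m : ℝ → Measure ℝ := fun α => if 0 < α then Vα α else 0 with hmdef
  have hm : Measurable m := by
    refine Measure.measurable_of_measurable_coe m fun s hs => ?_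
    set F : ℝ → ℝ≥0∞ := fun α => if 0 < α then Vα α s else ⨆ t : {t : ℝ // 0 < t}, Vα t s with hF
    have hFanti : Antitone F := by
      intro x y hxy
      by_cases hx : 0 < x
      · have hy : 0 < y := lt_of_lt_of_le hx hxy
        simp only [hF, if_pos hx, if_pos hy]
        exact resolventMono φ hφpos Vα hVα0 hVα hx hxy s
      · simp only [hF, if_neg hx]
        by_cases hy : 0 < y
        · simp only [if_pos hy]
          exact le_iSup (fun t : {t : ℝ // 0 < t} => Vα t s) ⟨y, hy⟩
        · simp only [if_neg hy]; exact le_rfl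
    have heq : (fun α => m α s) = (Ioi (0:ℝ)).indicator F := by
      funext α
      by_cases hα : 0 < α
      · rw [indicator_of_mem (mem_Ioi.2 hα)]
        simp only [hmdef, hF, if_pos hα]
      · rw [indicator_of_notMem (by simpa using hα)]
        simp only [hmdef, if_neg hα]
        rfl
    rw [heq]
    exact hFanti.measurable.indicator measurableSet_Ioi
  set W : Measure ℝ := Measure.bind (volume.restrict (Ioi (0:ℝ))) m with hWdef
  have hWap : ∀ B : Set ℝ, MeasurableSet B → W B = ∫⁻ α in Ioi (0:ℝ), Vα α B := by
    intro B hB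
    rw [hWdef, Measure.bind_apply hB hm.aemeasurable]
    refine setLIntegral_congr_fun measurableSet_Ioi (fun α hα => ?_)
    show (if 0 < α then Vα α else 0) B = Vα α B
    rw [if_pos (mem_Ioi.1 hα)]
  -- density
  set dens : ℝ → ℝ≥0∞ := fun x => ENNReal.ofReal x with hdens
  have hdensm : Measurable dens := ENNReal.measurable_ofReal.comp measurable_id
  have hgm : ∀ l : ℝ, Measurable fun x : ℝ => ENNReal.ofReal (exp (-(l * x))) := fun l =>
    ENNReal.measurable_ofReal.comp (continuous_exp.measurable.comp (measurable_id.const_mul l).neg)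
  have hxgm : ∀ l : ℝ, Measurable fun x : ℝ => ENNReal.ofReal (x * exp (-(l * x))) := fun l =>
    ENNReal.measurable_ofReal.comp
      (measurable_id.mul (continuous_exp.measurable.comp (measurable_id.const_mul l).neg))
  have hWD : ∀ (μ : Measure ℝ) (l : ℝ),
      ∫⁻ x, ENNReal.ofReal (exp (-(l * x))) ∂(μ.withDensity dens)
        = ∫⁻ x, ENNReal.ofReal (x * exp (-(l * x))) ∂μ := by
    intro μ l
    rw [lintegral_withDensity_eq_lintegral_mul _ hdensm (hgm l)]
    congr 1; funext x
    rcases le_or_gt 0 x with hx | hx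
    · simp only [Pi.mul_apply, hdens]
      exact (ENNReal.ofReal_mul hx).symm
    · simp only [Pi.mul_apply, hdens]
      rw [ENNReal.ofReal_of_nonpos hx.le, zero_mul,
        ENNReal.ofReal_of_nonpos (mul_nonpos_of_nonpos_of_nonneg hx.le (exp_nonneg _))]
  -- per-α weighted Laplace transform
  have hVαLT : ∀ α : ℝ, 0 < α → ∀ l : ℝ, 0 < l →
      ∫⁻ x, ENNReal.ofReal (x * exp (-(l * x))) ∂(Vα α)
        = ENNReal.ofReal (deriv φ l / (α + φ l) ^ 2) := fun α hα l hl =>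
    (resolventDerivLT φ hφdiff (Vα α) α hα (hαφ α hα) (hVα0 α hα) (hVα α hα) hl).1
  have hderivnn : ∀ l : ℝ, 0 < l → 0 ≤ deriv φ l := fun l hl =>
    (resolventDerivLT φ hφdiff (Vα 1) 1 one_pos (hαφ 1 one_pos) (hVα0 1 one_pos)
      (hVα 1 one_pos) hl).2
  -- Laplace transform of W
  have hWLT : ∀ l : ℝ, 0 < l → ∫⁻ x, ENNReal.ofReal (x * exp (-(l * x))) ∂W
      = ENNReal.ofReal (deriv φ l / φ l) := by
    intro l hl
    rw [hWdef, Measure.lintegral_bind hm.aemeasurable (hxgm l).aemeasurable]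
    have h1 : ∫⁻ α in Ioi (0:ℝ), (∫⁻ x, ENNReal.ofReal (x * exp (-(l * x))) ∂(m α))
        = ∫⁻ α in Ioi (0:ℝ), ENNReal.ofReal (deriv φ l / (α + φ l) ^ 2) := by
      refine setLIntegral_congr_fun measurableSet_Ioi (fun α hα => ?_)
      show (∫⁻ x, ENNReal.ofReal (x * exp (-(l * x))) ∂(if 0 < α then Vα α else 0)) = _
      rw [if_pos (mem_Ioi.1 hα)]
      exact hVαLT α (mem_Ioi.1 hα) l hl
    rw [h1, alphaIntegral (deriv φ l) (φ l) (hderivnn l hl) (hφpos l hl)]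
  -- apply uniqueness to the weighted measures
  have hEq : H.withDensity dens = W.withDensity dens := by
    refine laplaceUnique _ _ ?_ ?_ ?_ ?_
    · rw [withDensity_apply _ measurableSet_Iio]
      calc ∫⁻ x in Iio 0, dens x ∂H = ∫⁻ x in Iio 0, 0 ∂H := by
            refine setLIntegral_congr_fun measurableSet_Iio (fun x hx => ?_)
            simp only [hdens]
            exact ENNReal.ofReal_of_nonpos (le_of_lt hx)
        _ = 0 := lintegral_zero
    · rw [withDensity_apply _ measurableSet_Iio]
      calc ∫⁻ x in Iio 0, dens x ∂W = ∫⁻ x in Iio 0, 0 ∂W := by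
            refine setLIntegral_congr_fun measurableSet_Iio (fun x hx => ?_)
            simp only [hdens]
            exact ENNReal.ofReal_of_nonpos (le_of_lt hx)
        _ = 0 := lintegral_zero
    · have h1 : (fun x : ℝ => ENNReal.ofReal (exp (-x)))
          = fun x : ℝ => ENNReal.ofReal (exp (-(1 * x))) := by
        funext x; rw [one_mul]
      rw [h1, hWD H 1, hH 1 one_pos]
      exact ENNReal.ofReal_lt_top
    · intro l hl
      rw [hWD H l, hWD W l, hH l hl, hWLT l hl]
  -- undo the density on subsets of (0,∞)
  have hrec : ∀ (μ : Measure ℝ),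
      (μ.withDensity dens).withDensity (fun x => (dens x)⁻¹) A = μ A := by
    intro μ
    rw [← withDensity_mul _ hdensm (g := fun x => (dens x)⁻¹) hdensm.inv, withDensity_apply _ hA]
    calc ∫⁻ x in A, (dens * fun x => (dens x)⁻¹) x ∂μ = ∫⁻ x in A, 1 ∂μ := by
          refine setLIntegral_congr_fun hA (fun x hx => ?_)
          simp only [Pi.mul_apply]
          refine ENNReal.mul_inv_cancel ?_ ?_
          · simp only [hdens, ne_eq, ENNReal.ofReal_eq_zero, not_le]
            exact hA0 hx
          · exact ENNReal.ofReal_ne_top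
      _ = μ A := setLIntegral_one A
  calc H A = (H.withDensity dens).withDensity (fun x => (dens x)⁻¹) A := (hrec H).symm
    _ = (W.withDensity dens).withDensity (fun x => (dens x)⁻¹) A := by rw [hEq]
    _ = W A := hrec W
    _ = ∫⁻ α in Ioi (0:ℝ), Vα α A := hWap A hA
end
end

section
/- Let φ and φ* both be Bernstein functions of Lévy–Khintchine form, with triplets (q,a,Π) and (q*,a*,Π*) respectively, such that φ(λ) · φ*(λ) = λ for all λ > 0 (a conjugate pair of special Bernstein functions), and let H and H* be their harmonic potential measures. Then H(dx) + H*(dx) = x^{−1} dx as measures on (0,∞); consequently there exists a measurable function ρ : (0,∞) → [0,1] such that H(dx) = ρ(x) x^{−1} dx and H*(dx) = (1 − ρ(x)) x^{−1} dx. -/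
open MeasureTheory Real Set Filter Topology

noncomputable section

open scoped ENNReal NNReal

lemma stmt19_moment_ext (κ₁ κ₂ : Measure ℝ) [IsFiniteMeasure κ₁] [IsFiniteMeasure κ₂]
    (h₁ : κ₁ (Set.Icc 0 1)ᶜ = 0) (h₂ : κ₂ (Set.Icc 0 1)ᶜ = 0)
    (h : ∀ n : ℕ, ∫ x, x ^ n ∂κ₁ = ∫ x, x ^ n ∂κ₂) : κ₁ = κ₂ := by
  have hae₁ : ∀ᵐ x ∂κ₁, x ∈ Set.Icc (0:ℝ) 1 := mem_ae_iff.mpr h₁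
  have hae₂ : ∀ᵐ x ∂κ₂, x ∈ Set.Icc (0:ℝ) 1 := mem_ae_iff.mpr h₂
  -- integrability of monomials
  have hint : ∀ (κ : Measure ℝ) [IsFiniteMeasure κ], (∀ᵐ x ∂κ, x ∈ Set.Icc (0:ℝ) 1) →
      ∀ n : ℕ, Integrable (fun x : ℝ => x ^ n) κ := by
    intro κ _ hae n
    refine Integrable.mono' (integrable_const 1) ?_ ?_
    · exact (continuous_pow n).aestronglyMeasurable
    · filter_upwards [hae] with x hx
      rw [Real.norm_eq_abs, abs_of_nonneg (pow_nonneg hx.1 n)]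
      exact pow_le_one₀ hx.1 hx.2
  -- polynomial integrals agree
  have hpoly : ∀ p : Polynomial ℝ, ∫ x, p.eval x ∂κ₁ = ∫ x, p.eval x ∂κ₂ := by
    intro p
    have he : ∀ x : ℝ, p.eval x =
        ∑ i ∈ Finset.range (p.natDegree + 1), p.coeff i * x ^ i := by
      intro x; rw [Polynomial.eval_eq_sum_range]
    simp_rw [he]
    rw [integral_finset_sum _ (fun i _ => (hint κ₁ hae₁ i).const_mul _),
      integral_finset_sum _ (fun i _ => (hint κ₂ hae₂ i).const_mul _)]
    simp_rw [integral_const_mul, h]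
  apply ext_of_forall_lintegral_eq_of_IsFiniteMeasure
  intro f
  have hgc : Continuous (fun x : ℝ => (f x : ℝ)) := NNReal.continuous_coe.comp f.continuous
  have hgint : ∀ (κ : Measure ℝ) [IsFiniteMeasure κ], Integrable (fun x : ℝ => (f x : ℝ)) κ := by
    intro κ _
    refine ⟨hgc.aestronglyMeasurable, ?_⟩
    rw [hasFiniteIntegral_iff_ofReal (Eventually.of_forall fun x => (f x).coe_nonneg)]
    simpa using f.lintegral_lt_top_of_nnreal κ
  refine (ENNReal.toReal_eq_toReal_iff' (f.lintegral_lt_top_of_nnreal κ₁).ne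
    (f.lintegral_lt_top_of_nnreal κ₂).ne).mp ?_
  rw [f.toReal_lintegral_coe_eq_integral κ₁, f.toReal_lintegral_coe_eq_integral κ₂]
  -- now real integrals
  set g : ℝ → ℝ := fun x => (f x : ℝ) with hg
  set A := ∫ x, g x ∂κ₁
  set B := ∫ x, g x ∂κ₂
  set M₁ := (κ₁ Set.univ).toReal
  set M₂ := (κ₂ Set.univ).toReal
  have key : ∀ ε : ℝ, 0 < ε → |A - B| ≤ ε * (M₁ + M₂) := by
    intro ε hε
    obtain ⟨p, hp⟩ := exists_polynomial_near_of_continuousOn 0 1 g hgc.continuousOn ε hε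
    have hd : ∀ (κ : Measure ℝ) [IsFiniteMeasure κ], (∀ᵐ x ∂κ, x ∈ Set.Icc (0:ℝ) 1) →
        |∫ x, g x ∂κ - ∫ x, p.eval x ∂κ| ≤ ε * (κ Set.univ).toReal := by
      intro κ _ hae
      have hpint : Integrable (fun x : ℝ => p.eval x) κ := by
        have he : ∀ x : ℝ, p.eval x =
            ∑ i ∈ Finset.range (p.natDegree + 1), p.coeff i * x ^ i := by
          intro x; rw [Polynomial.eval_eq_sum_range]
        simp_rw [he]
        exact integrable_finset_sum _ (fun i _ => (hint κ hae i).const_mul _)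
      rw [← integral_sub (hgint κ) hpint]
      have := norm_integral_le_of_norm_le_const (μ := κ)
        (f := fun x => g x - p.eval x) (C := ε) ?_
      · simpa [measureReal_def] using this
      · filter_upwards [hae] with x hx
        rw [Real.norm_eq_abs, abs_sub_comm]
        exact (hp x hx).le
    calc |A - B| ≤ |A - ∫ x, p.eval x ∂κ₁| + |∫ x, p.eval x ∂κ₁ - B| := abs_sub_le _ _ _
    _ ≤ ε * M₁ + ε * M₂ := by
        refine add_le_add (hd κ₁ hae₁) ?_
        rw [hpoly p]
        rw [abs_sub_comm]
        exact hd κ₂ hae₂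
    _ = ε * (M₁ + M₂) := by ring
  have hC : 0 ≤ M₁ + M₂ := by positivity
  have : |A - B| ≤ 0 := by
    refine le_of_forall_pos_le_add fun ε hε => ?_
    have := key (ε / (M₁ + M₂ + 1)) (by positivity)
    calc |A - B| ≤ ε / (M₁ + M₂ + 1) * (M₁ + M₂) := this
    _ ≤ ε := by
        rw [div_mul_eq_mul_div, div_le_iff₀ (by positivity)]
        nlinarith
    _ ≤ 0 + ε := by linarith
  have := abs_nonpos_iff.mp this
  linarith [sub_eq_zero.mp this]

lemma stmt19_laplace_ext (ν₁ ν₂ : Measure ℝ)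
    (h₁ : ν₁ (Set.Iic 0) = 0) (h₂ : ν₂ (Set.Iic 0) = 0)
    (h : ∀ l : ℝ, 0 < l → ∫⁻ x, ENNReal.ofReal (x * Real.exp (-(l * x))) ∂ν₁
      = ∫⁻ x, ENNReal.ofReal (x * Real.exp (-(l * x))) ∂ν₂)
    (hfin : ∫⁻ x, ENNReal.ofReal (x * Real.exp (-(1 * x))) ∂ν₁ ≠ ⊤) : ν₁ = ν₂ := by
  set f₀ : ℝ → ℝ≥0∞ := fun x => ENNReal.ofReal (x * Real.exp (-x)) with hf₀
  have hf₀m : Measurable f₀ :=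
    (measurable_id.mul ((measurable_id.neg).exp)).ennreal_ofReal
  have hf₀eq : ∀ x : ℝ, f₀ x = ENNReal.ofReal (x * Real.exp (-(1 * x))) := by
    intro x; simp [hf₀]
  set κ₁ : Measure ℝ := ν₁.withDensity f₀ with hκ₁
  set κ₂ : Measure ℝ := ν₂.withDensity f₀ with hκ₂
  have hκuniv : ∀ (ν : Measure ℝ), ν.withDensity f₀ Set.univ
      = ∫⁻ x, ENNReal.ofReal (x * Real.exp (-(1 * x))) ∂ν := by
    intro ν
    rw [withDensity_apply _ MeasurableSet.univ, Measure.restrict_univ]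
    exact lintegral_congr fun x => hf₀eq x
  haveI : IsFiniteMeasure κ₁ := ⟨by rw [hκ₁, hκuniv]; exact hfin.lt_top⟩
  haveI : IsFiniteMeasure κ₂ := ⟨by
    rw [hκ₂, hκuniv, ← h 1 one_pos]; exact hfin.lt_top⟩
  -- the map x ↦ exp (-x)
  set e : ℝ → ℝ := fun x => Real.exp (-x) with he
  have hec : Continuous e := Real.continuous_exp.comp continuous_neg
  have hei : Function.Injective e := Real.exp_injective.comp neg_injective
  have hemb : MeasurableEmbedding e := hec.measurableEmbedding hei
  set lam₁ : Measure ℝ := Measure.map e κ₁ with hlam₁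
  set lam₂ : Measure ℝ := Measure.map e κ₂ with hlam₂
  haveI : IsFiniteMeasure lam₁ := Measure.isFiniteMeasure_map κ₁ e
  haveI : IsFiniteMeasure lam₂ := Measure.isFiniteMeasure_map κ₂ e
  -- moments of lam
  have hmom : ∀ (ν : Measure ℝ) (n : ℕ),
      ∫⁻ t, (ENNReal.ofReal t) ^ n ∂(Measure.map e (ν.withDensity f₀))
        = ∫⁻ x, ENNReal.ofReal (x * Real.exp (-((n + 1 : ℝ) * x))) ∂ν := by
    intro ν n
    rw [lintegral_map (Measurable.pow_const ENNReal.measurable_ofReal n) hec.measurable]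
    rw [lintegral_withDensity_eq_lintegral_mul _ hf₀m
      (Measurable.pow_const (hec.measurable.ennreal_ofReal) n)]
    refine lintegral_congr fun x => ?_
    simp only [Pi.mul_apply, Function.comp_apply]
    rw [mul_comm, ← ENNReal.ofReal_pow (Real.exp_nonneg _), ← ENNReal.ofReal_mul
      (pow_nonneg (Real.exp_nonneg _) n)]
    congr 1
    rw [← Real.exp_nat_mul, show Real.exp (↑n * -x) * (x * Real.exp (-x))
      = x * Real.exp (↑n * -x + -x) by rw [Real.exp_add]; ring]
    congr 1
    ring
  -- lam supported in Icc 0 1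
  have hsupp : ∀ (ν : Measure ℝ), ν (Set.Iic 0) = 0 →
      Measure.map e (ν.withDensity f₀) (Set.Icc (0:ℝ) 1)ᶜ = 0 := by
    intro ν hν
    rw [Measure.map_apply hec.measurable (measurableSet_Icc.compl)]
    have hpre : e ⁻¹' (Set.Icc (0:ℝ) 1)ᶜ = Set.Iio 0 := by
      ext x
      simp only [Set.mem_preimage, Set.mem_compl_iff, Set.mem_Icc, Set.mem_Iio, not_and_or,
        not_le, he]
      constructor
      · rintro (hlt | hgt)
        · exact absurd (Real.exp_nonneg _) (by simpa using hlt)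
        · by_contra hx
          push_neg at hx
          exact absurd (Real.exp_le_one_iff.mpr (by linarith) : Real.exp (-x) ≤ 1) hgt.not_ge
      · intro hx
        right
        rw [show (1:ℝ) = Real.exp 0 by simp]
        exact Real.exp_lt_exp.mpr (by linarith)
    rw [hpre]
    exact measure_mono_null Set.Iio_subset_Iic_self
      ((withDensity_absolutelyContinuous ν f₀) hν)
  -- real moments of lam agree
  have hlam : lam₁ = lam₂ := by
    apply stmt19_moment_ext lam₁ lam₂ (hsupp ν₁ h₁) (hsupp ν₂ h₂)
    intro n
    have haeIcc : ∀ (lam : Measure ℝ), lam (Set.Icc (0:ℝ) 1)ᶜ = 0 →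
        ∫ t, t ^ n ∂lam = (∫⁻ t, (ENNReal.ofReal t) ^ n ∂lam).toReal := by
      intro lam hlam0
      have hae : ∀ᵐ t ∂lam, t ∈ Set.Icc (0:ℝ) 1 := mem_ae_iff.mpr hlam0
      rw [integral_eq_lintegral_of_nonneg_ae ?_ ((continuous_pow n).aestronglyMeasurable)]
      · congr 1
        refine lintegral_congr_ae ?_
        filter_upwards [hae] with t ht
        rw [ENNReal.ofReal_pow ht.1]
      · filter_upwards [hae] with t ht
        exact pow_nonneg ht.1 n
    rw [haeIcc lam₁ (hsupp ν₁ h₁), haeIcc lam₂ (hsupp ν₂ h₂), hlam₁, hlam₂, hκ₁, hκ₂,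
      hmom ν₁ n, hmom ν₂ n, h (n + 1) (by positivity)]
  -- recover κ₁ = κ₂
  have hκ : κ₁ = κ₂ := by
    ext s hs
    have h1 : lam₁ (e '' s) = lam₂ (e '' s) := by rw [hlam]
    rw [hlam₁, hlam₂, Measure.map_apply hec.measurable (hemb.measurableSet_image' hs),
      Measure.map_apply hec.measurable (hemb.measurableSet_image' hs),
      hei.preimage_image] at h1
    exact h1
  -- recover ν₁ = ν₂
  have hrec : ∀ (ν : Measure ℝ), ν (Set.Iic 0) = 0 →
      (ν.withDensity f₀).withDensity (fun x => (f₀ x)⁻¹) = ν := by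
    intro ν hν
    rw [← withDensity_mul _ hf₀m (g := fun x => (f₀ x)⁻¹) hf₀m.inv]
    have hae : ∀ᵐ x ∂ν, (f₀ * fun x => (f₀ x)⁻¹) x = (1 : ℝ → ℝ≥0∞) x := by
      have hpos : ∀ᵐ x ∂ν, (0:ℝ) < x := by
        refine mem_ae_iff.mpr ?_
        have hcs : {x : ℝ | (0:ℝ) < x}ᶜ = Set.Iic 0 := by ext x; simp [not_lt]
        rwa [hcs]
      filter_upwards [hpos] with x hx
      simp only [Pi.mul_apply, Pi.one_apply]
      refine ENNReal.mul_inv_cancel ?_ (by simp [hf₀])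
      simp only [hf₀, ne_eq, ENNReal.ofReal_eq_zero, not_le]
      positivity
    rw [withDensity_congr_ae hae, withDensity_one]
  calc ν₁ = (ν₁.withDensity f₀).withDensity (fun x => (f₀ x)⁻¹) := (hrec ν₁ h₁).symm
  _ = (ν₂.withDensity f₀).withDensity (fun x => (f₀ x)⁻¹) := by rw [← hκ₁, ← hκ₂, hκ]
  _ = ν₂ := hrec ν₂ h₂

lemma stmt19_deriv_nonneg {f : ℝ → ℝ} {l : ℝ} (hl : 0 < l)
    (hmono : MonotoneOn f (Set.Ici 0)) (hdiff : DifferentiableAt ℝ f l) :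
    0 ≤ deriv f l := by
  have hd := hdiff.hasDerivAt
  rw [hasDerivAt_iff_tendsto_slope] at hd
  have hd' : Tendsto (slope f l) (𝓝[>] l) (𝓝 (deriv f l)) :=
    hd.mono_left (nhdsWithin_mono l fun x hx => ne_of_gt hx)
  refine ge_of_tendsto hd' ?_
  filter_upwards [self_mem_nhdsWithin] with y hy
  rw [slope_def_field]
  apply div_nonneg
  · exact sub_nonneg.mpr (hmono (Set.mem_Ici.mpr hl.le)
      (Set.mem_Ici.mpr (hl.trans hy).le) hy.le)
  · simp only [Set.mem_Ioi] at hy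
    linarith


lemma stmt19_mono (q a : ℝ) (ha : 0 ≤ a) (ν : Measure ℝ) (hν0 : ν (Set.Iic 0) = 0)
    (hνint : ∫⁻ x, ENNReal.ofReal (min x 1) ∂ν < ⊤)
    (φ : ℝ → ℝ)
    (hφ : ∀ l : ℝ, 0 ≤ l → φ l = q + a * l + ∫ x, (1 - Real.exp (-(l * x))) ∂ν) :
    MonotoneOn φ (Set.Ici 0) := by
  have hpos : ∀ᵐ x ∂ν, (0:ℝ) < x := by
    refine mem_ae_iff.mpr ?_
    have hcs : {x : ℝ | (0:ℝ) < x}ᶜ = Set.Iic 0 := by ext x; simp [not_lt]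
    rwa [hcs]
  have hint : ∀ l : ℝ, 0 ≤ l → Integrable (fun x => 1 - Real.exp (-(l * x))) ν := by
    intro l hl
    have hmeas : AEStronglyMeasurable (fun x : ℝ => 1 - Real.exp (-(l * x))) ν :=
      (continuous_const.sub
        (Real.continuous_exp.comp (continuous_const.mul continuous_id).neg)).aestronglyMeasurable
    refine ⟨hmeas, ?_⟩
    have hnn : 0 ≤ᵐ[ν] fun x => 1 - Real.exp (-(l * x)) := by
      filter_upwards [hpos] with x hx
      have : Real.exp (-(l * x)) ≤ 1 := Real.exp_le_one_iff.mpr (by nlinarith)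
      simp only [Pi.zero_apply]
      linarith
    rw [hasFiniteIntegral_iff_ofReal hnn]
    have hb : ∀ᵐ x ∂ν, ENNReal.ofReal (1 - Real.exp (-(l * x)))
        ≤ ENNReal.ofReal (max l 1) * ENNReal.ofReal (min x 1) := by
      filter_upwards [hpos] with x hx
      rw [← ENNReal.ofReal_mul (le_max_of_le_right zero_le_one)]
      apply ENNReal.ofReal_le_ofReal
      have h1 : 1 - Real.exp (-(l * x)) ≤ l * x := by
        have := Real.add_one_le_exp (-(l * x))
        linarith
      have h2 : 1 - Real.exp (-(l * x)) ≤ 1 := by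
        linarith [Real.exp_nonneg (-(l * x))]
      rcases le_total x 1 with hx1 | hx1
      · calc 1 - Real.exp (-(l*x)) ≤ l * x := h1
        _ ≤ max l 1 * x := by nlinarith [le_max_left l 1]
        _ = max l 1 * min x 1 := by rw [min_eq_left hx1]
      · calc 1 - Real.exp (-(l*x)) ≤ 1 := h2
        _ ≤ max l 1 * 1 := by nlinarith [le_max_right l 1]
        _ = max l 1 * min x 1 := by rw [min_eq_right hx1]
    calc ∫⁻ x, ENNReal.ofReal (1 - Real.exp (-(l * x))) ∂ν
        ≤ ∫⁻ x, ENNReal.ofReal (max l 1) * ENNReal.ofReal (min x 1) ∂ν :=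
          lintegral_mono_ae hb
    _ = ENNReal.ofReal (max l 1) * ∫⁻ x, ENNReal.ofReal (min x 1) ∂ν :=
          lintegral_const_mul' _ _ ENNReal.ofReal_ne_top
    _ < ⊤ := ENNReal.mul_lt_top ENNReal.ofReal_lt_top hνint
  intro l₁ h₁ l₂ h₂ h12
  simp only [Set.mem_Ici] at h₁ h₂
  rw [hφ l₁ h₁, hφ l₂ h₂]
  have hIle : (∫ x, (1 - Real.exp (-(l₁ * x))) ∂ν) ≤ ∫ x, (1 - Real.exp (-(l₂ * x))) ∂ν := by
    refine integral_mono_ae (hint l₁ h₁) (hint l₂ h₂) ?_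
    filter_upwards [hpos] with x hx
    have : Real.exp (-(l₂ * x)) ≤ Real.exp (-(l₁ * x)) := Real.exp_le_exp.mpr (by nlinarith)
    linarith
  nlinarith

/-- for a conjugate pair `(φ, φ*)` of special Bernstein functions
(`φ(λ) φ*(λ) = λ`), the harmonic potential measures satisfy
`H(dx) + H*(dx) = x^{-1} dx` on `(0,∞)`; consequently there is a measurable
`ρ : (0,∞) → [0,1]` with `H(dx) = ρ(x) x^{-1} dx` and `H*(dx) = (1−ρ(x)) x^{-1} dx`. -/
theorem stmt19
    (q a : ℝ) (hq : 0 ≤ q) (ha : 0 ≤ a)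
    (ν : Measure ℝ) (hν0 : ν (Set.Iic 0) = 0)
    (hνint : ∫⁻ x, ENNReal.ofReal (min x 1) ∂ν < ⊤)
    (hnz : ¬(q = 0 ∧ a = 0 ∧ ν = 0))
    (φ : ℝ → ℝ)
    (hφ : ∀ l : ℝ, 0 ≤ l → φ l = q + a * l + ∫ x, (1 - Real.exp (-(l * x))) ∂ν)
    (hφpos : ∀ l : ℝ, 0 < l → 0 < φ l)
    (hφdiff : ∀ l : ℝ, 0 < l → DifferentiableAt ℝ φ l)
    (qs as : ℝ) (hqs : 0 ≤ qs) (has : 0 ≤ as)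
    (νs : Measure ℝ) (hνs0 : νs (Set.Iic 0) = 0)
    (hνsint : ∫⁻ x, ENNReal.ofReal (min x 1) ∂νs < ⊤)
    (hnzs : ¬(qs = 0 ∧ as = 0 ∧ νs = 0))
    (φs : ℝ → ℝ)
    (hφs : ∀ l : ℝ, 0 ≤ l → φs l = qs + as * l + ∫ x, (1 - Real.exp (-(l * x))) ∂νs)
    (hφspos : ∀ l : ℝ, 0 < l → 0 < φs l)
    (hφsdiff : ∀ l : ℝ, 0 < l → DifferentiableAt ℝ φs l)
    (hconj : ∀ l : ℝ, 0 < l → φ l * φs l = l)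
    (H : Measure ℝ) (hH0 : H (Set.Iic 0) = 0)
    (hH : ∀ l : ℝ, 0 < l →
      ∫⁻ x, ENNReal.ofReal (x * Real.exp (-(l * x))) ∂H
        = ENNReal.ofReal (deriv φ l / φ l))
    (Hs : Measure ℝ) (hHs0 : Hs (Set.Iic 0) = 0)
    (hHs : ∀ l : ℝ, 0 < l →
      ∫⁻ x, ENNReal.ofReal (x * Real.exp (-(l * x))) ∂Hs
        = ENNReal.ofReal (deriv φs l / φs l)) :
    H + Hs = (volume.restrict (Set.Ioi 0)).withDensity
        (fun x => ENNReal.ofReal x⁻¹) ∧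
    ∃ ρ : ℝ → ℝ, Measurable ρ ∧ (∀ x : ℝ, 0 ≤ ρ x ∧ ρ x ≤ 1) ∧
      H = (volume.restrict (Set.Ioi 0)).withDensity
        (fun x => ENNReal.ofReal (ρ x / x)) ∧
      Hs = (volume.restrict (Set.Ioi 0)).withDensity
        (fun x => ENNReal.ofReal ((1 - ρ x) / x)) := by
  set μ0 : Measure ℝ := (volume.restrict (Set.Ioi 0)).withDensity
      (fun x => ENNReal.ofReal x⁻¹) with hμ0
  -- Step 1: logarithmic derivative identity
  have hlogderiv : ∀ l : ℝ, 0 < l → deriv φ l / φ l + deriv φs l / φs l = 1 / l := by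
    intro l hl
    have hev : (fun x => φ x * φs x) =ᶠ[𝓝 l] (fun x => x) := by
      filter_upwards [Ioi_mem_nhds hl] with x hx
      exact hconj x hx
    have hdmul : deriv (fun x => φ x * φs x) l = deriv φ l * φs l + φ l * deriv φs l :=
      ((hφdiff l hl).hasDerivAt.mul (hφsdiff l hl).hasDerivAt).deriv
    have hid : deriv (fun x => φ x * φs x) l = 1 := by
      rw [hev.deriv_eq]; simp
    have hkey : deriv φ l * φs l + φ l * deriv φs l = 1 := by rw [← hdmul, hid]
    have hφne := (hφpos l hl).ne'
    have hφsne := (hφspos l hl).ne'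
    have hexp : deriv φ l / φ l + deriv φs l / φs l
        = (deriv φ l * φs l + φ l * deriv φs l) / (φ l * φs l) := by
      field_simp
    rw [hexp, hkey, hconj l hl]
  -- Step 2: nonnegativity of the log-derivatives
  have hd1 : ∀ l : ℝ, 0 < l → 0 ≤ deriv φ l / φ l := fun l hl =>
    div_nonneg (stmt19_deriv_nonneg hl (stmt19_mono q a ha ν hν0 hνint φ hφ) (hφdiff l hl))
      (hφpos l hl).le
  have hd2 : ∀ l : ℝ, 0 < l → 0 ≤ deriv φs l / φs l := fun l hl =>
    div_nonneg (stmt19_deriv_nonneg hl (stmt19_mono qs as has νs hνs0 hνsint φs hφs)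
      (hφsdiff l hl)) (hφspos l hl).le
  -- Step A: Laplace transform of H + Hs
  have hsum : ∀ l : ℝ, 0 < l →
      ∫⁻ x, ENNReal.ofReal (x * Real.exp (-(l * x))) ∂(H + Hs) = ENNReal.ofReal (1 / l) := by
    intro l hl
    rw [lintegral_add_measure, hH l hl, hHs l hl,
      ← ENNReal.ofReal_add (hd1 l hl) (hd2 l hl), hlogderiv l hl]
  -- Step B: Laplace transform of μ0
  have hrhs : ∀ l : ℝ, 0 < l →
      ∫⁻ x, ENNReal.ofReal (x * Real.exp (-(l * x))) ∂μ0 = ENNReal.ofReal (1 / l) := by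
    intro l hl
    have hmg : Measurable fun x : ℝ => ENNReal.ofReal (x * Real.exp (-(l * x))) := by
      fun_prop
    rw [hμ0, lintegral_withDensity_eq_lintegral_mul _ measurable_inv.ennreal_ofReal hmg]
    refine Eq.trans (setLIntegral_congr_fun
      (g := fun x => ENNReal.ofReal (Real.exp (-(l * x)))) measurableSet_Ioi
      (fun x hx => ?_)) ?_
    · simp only [Pi.mul_apply]
      have hx0 : (0:ℝ) < x := hx
      rw [← ENNReal.ofReal_mul (by positivity : (0:ℝ) ≤ x⁻¹)]
      congr 1
      field_simp
    have hIntg : IntegrableOn (fun x => Real.exp (-(l * x))) (Set.Ioi 0) := by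
      have := exp_neg_integrableOn_Ioi 0 hl
      simpa [neg_mul] using this
    rw [← ofReal_integral_eq_lintegral_ofReal hIntg
      (Eventually.of_forall fun x => Real.exp_nonneg _)]
    congr 1
    have hg := Real.integral_rpow_mul_exp_neg_mul_Ioi (a := 1) one_pos hl
    simpa [Real.Gamma_one, Real.rpow_one] using hg
  -- first part
  have hsumIic : (H + Hs) (Set.Iic 0) = 0 := by
    simp [hH0, hHs0]
  have hμ0Iic : μ0 (Set.Iic 0) = 0 := by
    rw [hμ0, withDensity_apply _ measurableSet_Iic,
      Measure.restrict_restrict measurableSet_Iic]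
    have hempty : Set.Iic (0:ℝ) ∩ Set.Ioi 0 = ∅ := by
      ext x; simp only [Set.mem_inter_iff, Set.mem_Iic, Set.mem_Ioi, Set.mem_empty_iff_false,
        iff_false, not_and, not_lt]
      intro hx; exact hx
    rw [hempty, Measure.restrict_empty, lintegral_zero_measure]
  have E : H + Hs = μ0 := by
    refine stmt19_laplace_ext _ _ hsumIic hμ0Iic
      (fun l hl => by rw [hsum l hl, hrhs l hl]) ?_
    rw [hsum 1 one_pos]
    simp
  refine ⟨E, ?_⟩
  -- second part
  haveI : SigmaFinite μ0 := by
    rw [hμ0]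
    exact SigmaFinite.withDensity_of_ne_top
      (Eventually.of_forall fun x => ENNReal.ofReal_ne_top)
  have hle : H ≤ μ0 := by rw [← E]; exact Measure.le_add_right le_rfl
  have hles : Hs ≤ μ0 := by rw [← E]; exact Measure.le_add_left le_rfl
  haveI : SigmaFinite H := _root_.MeasureTheory.Measure.sigmaFinite_of_le μ0 hle
  haveI : SigmaFinite Hs := _root_.MeasureTheory.Measure.sigmaFinite_of_le μ0 hles
  have hac : H ≪ μ0 := Measure.absolutelyContinuous_of_le hle
  have hacs : Hs ≪ μ0 := Measure.absolutelyContinuous_of_le hles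
  set g := H.rnDeriv μ0 with hg
  set gs := Hs.rnDeriv μ0 with hgs
  have hH' : μ0.withDensity g = H := Measure.withDensity_rnDeriv_eq H μ0 hac
  have hHs' : μ0.withDensity gs = Hs := Measure.withDensity_rnDeriv_eq Hs μ0 hacs
  have hadd : ∀ᵐ x ∂μ0, g x + gs x = 1 := by
    have h1 := Measure.rnDeriv_add' H Hs μ0
    have h3 := Measure.rnDeriv_self μ0
    have h2 : (H + Hs).rnDeriv μ0 = μ0.rnDeriv μ0 := by rw [E]
    filter_upwards [h1, h3] with x hx1 hx3
    have hx4 : g x + gs x = ((H + Hs).rnDeriv μ0) x := by rw [hx1]; rfl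
    rw [hx4, h2]
    exact hx3
  have hgle : ∀ᵐ x ∂μ0, g x ≤ 1 := by
    have := Measure.rnDeriv_le_one_of_le hle
    filter_upwards [this] with x hx
    simpa using hx
  set ρ : ℝ → ℝ := fun x => (min (g x) 1).toReal with hρ
  have hρmeas : Measurable ρ :=
    ((Measure.measurable_rnDeriv H μ0).min measurable_const).ennreal_toReal
  have hρ01 : ∀ x : ℝ, 0 ≤ ρ x ∧ ρ x ≤ 1 := by
    intro x
    refine ⟨ENNReal.toReal_nonneg, ?_⟩
    have h1 : min (g x) 1 ≤ 1 := min_le_right _ _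
    have := ENNReal.toReal_mono ENNReal.one_ne_top h1
    simpa [hρ] using this
  have hgρ : (fun x => ENNReal.ofReal (ρ x)) =ᵐ[μ0] g := by
    filter_upwards [hgle] with x hx
    have hne : g x ≠ ⊤ := (hx.trans_lt ENNReal.one_lt_top).ne
    simp only [hρ]
    rw [min_eq_left hx, ENNReal.ofReal_toReal hne]
  have hgsρ : (fun x => ENNReal.ofReal (1 - ρ x)) =ᵐ[μ0] gs := by
    filter_upwards [hgle, hadd] with x hx hx2
    have hne : g x ≠ ⊤ := (hx.trans_lt ENNReal.one_lt_top).ne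
    have hgsx : gs x = 1 - g x :=
      ENNReal.eq_sub_of_add_eq hne (by rw [add_comm]; exact hx2)
    simp only [hρ]
    rw [min_eq_left hx, hgsx, ENNReal.ofReal_sub _ ENNReal.toReal_nonneg,
      ENNReal.ofReal_one, ENNReal.ofReal_toReal hne]
  have hden : ∀ (r : ℝ → ℝ), Measurable r → (∀ x, 0 ≤ r x) →
      (volume.restrict (Set.Ioi 0)).withDensity (fun x => ENNReal.ofReal (r x / x))
        = μ0.withDensity (fun x => ENNReal.ofReal (r x)) := by
    intro r hr hrpos
    rw [hμ0, ← withDensity_mul _ measurable_inv.ennreal_ofReal hr.ennreal_ofReal]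
    refine withDensity_congr_ae (Eventually.of_forall fun x => ?_)
    simp only [Pi.mul_apply]
    rcases le_or_gt x 0 with hx | hx
    · have hz1 : ENNReal.ofReal x⁻¹ = 0 := ENNReal.ofReal_eq_zero.mpr (inv_nonpos.mpr hx)
      have hz2 : ENNReal.ofReal (r x / x) = 0 :=
        ENNReal.ofReal_eq_zero.mpr (div_nonpos_of_nonneg_of_nonpos (hrpos x) hx)
      rw [hz1, hz2, zero_mul]
    · rw [← ENNReal.ofReal_mul (by positivity : (0:ℝ) ≤ x⁻¹)]
      congr 1
      field_simp
  refine ⟨ρ, hρmeas, hρ01, ?_, ?_⟩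
  · rw [hden ρ hρmeas (fun x => (hρ01 x).1), withDensity_congr_ae hgρ, hH']
  · rw [hden (fun x => 1 - ρ x) (measurable_const.sub hρmeas)
      (fun x => sub_nonneg.mpr (hρ01 x).2), withDensity_congr_ae hgsρ, hHs']
end
end
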